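/- arXiv:1704.04398 — 2 statements merged into one kernel-verified Lean document; each statement's English description precedes it below -/
import Mathlib

section
/- Let x∼y be an edge of G and let D = max(d_x, d_y). Then the limit κ(x,y) = lim_{p→1⁻} κ_p(x,y)/(1−p) exists, and for every p ∈ [1/(D+1), 1] one has κ_p(x,y) = (1−p)·κ(x,y). -/
open scoped Classical

noncomputable def mu {V : Type*} (G : SimpleGraph V) [G.LocallyFinite] (x : V) (p : ℝ) :
    V → ℝ :=
  fun z => if z = x then p else if G.Adj x z then (1 - p) / (G.degree x) else 0

def IsPlan {V : Type*} (π : V × V → ℝ) (μ1 μ2 : V → ℝ) : Prop :=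
  (∀ q, π q ∈ Set.Icc (0 : ℝ) 1) ∧ (Function.support π).Finite ∧
    (∀ u, ∑ᶠ v, π (u, v) = μ1 u) ∧ (∀ v, ∑ᶠ u, π (u, v) = μ2 v)

noncomputable def cost {V : Type*} (G : SimpleGraph V) (π : V × V → ℝ) : ℝ :=
  ∑ᶠ q : V × V, (G.dist q.1 q.2 : ℝ) * π q

noncomputable def W1 {V : Type*} (G : SimpleGraph V) (μ1 μ2 : V → ℝ) : ℝ :=
  sInf (cost G '' {π | IsPlan π μ1 μ2})

noncomputable def kappa {V : Type*} (G : SimpleGraph V) [G.LocallyFinite]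
    (p : ℝ) (x y : V) : ℝ :=
  1 - W1 G (mu G x p) (mu G y p)

def IsLip {V : Type*} (G : SimpleGraph V) (φ : V → ℝ) : Prop :=
  ∀ u v, |φ u - φ v| ≤ (G.dist u v : ℝ)

noncomputable def Fpot {V : Type*} (G : SimpleGraph V) [G.LocallyFinite]
    (x y : V) (φ : V → ℝ) : ℝ :=
  (G.degree y : ℝ) * ∑ z ∈ (G.neighborFinset x).erase y, φ z
    - (G.degree x : ℝ) * ∑ z ∈ (G.neighborFinset y).erase x, φ z

noncomputable def cIdle {V : Type*} (G : SimpleGraph V) [G.LocallyFinite]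
    (x y : V) (j : ℤ) : ℝ :=
  sSup (Fpot G x y ''
    {φ | IsLip G φ ∧ (∀ w, ∃ n : ℤ, φ w = (n : ℝ)) ∧ φ x = (j : ℝ) ∧ φ y = 0})

noncomputable def fIdle {V : Type*} (G : SimpleGraph V) [G.LocallyFinite]
    (x y : V) (j : ℤ) (p : ℝ) : ℝ :=
  (p - (1 - p) / (G.degree y : ℝ)) * (j : ℝ)
    + ((1 - p) / ((G.degree x : ℝ) * (G.degree y : ℝ))) * cIdle G x y j

def IsFinProb {V : Type*} (μ : V → ℝ) : Prop :=
  (∀ v, 0 ≤ μ v) ∧ (Function.support μ).Finite ∧ ∑ᶠ v, μ v = 1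

set_option linter.unusedSectionVars false
namespace Stmt15

open Finset

variable {V : Type*}

noncomputable def ball (G : SimpleGraph V) [G.LocallyFinite] (x : V) : Finset V :=
  insert x (G.neighborFinset x)

section Basic

variable (G : SimpleGraph V) [G.LocallyFinite] (x : V) (p : ℝ)

lemma mu_self : mu G x p x = p := by simp [mu]

lemma mu_adj {z : V} (h : G.Adj x z) : mu G x p z = (1 - p) / (G.degree x) := by
  simp [mu, h, h.ne']

lemma mu_off {z : V} (h : z ∉ ball G x) : mu G x p z = 0 := by
  simp only [ball, mem_insert, SimpleGraph.mem_neighborFinset] at h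
  push_neg at h
  simp [mu, h.1, h.2]

lemma mu_supp : Function.support (mu G x p) ⊆ (ball G x : Set V) := by
  intro z hz
  by_contra hz'
  exact hz (mu_off G x p (by simpa using hz'))

lemma mu_nonneg (hp : 0 ≤ p) (hp' : p ≤ 1) (z : V) : 0 ≤ mu G x p z := by
  unfold mu
  split_ifs
  · exact hp
  · exact div_nonneg (by linarith) (Nat.cast_nonneg _)
  · exact le_rfl

lemma mu_le_one (hd : 0 < G.degree x) (hp : 0 ≤ p) (hp' : p ≤ 1) (z : V) :
    mu G x p z ≤ 1 := by
  unfold mu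
  split_ifs
  · exact hp'
  · rw [div_le_one (by exact_mod_cast hd)]
    have : (1 : ℝ) ≤ G.degree x := by exact_mod_cast hd
    linarith
  · norm_num

lemma mu_sum (hd : 0 < G.degree x) : ∑ z ∈ ball G x, mu G x p z = 1 := by
  rw [ball, sum_insert (by simp), mu_self]
  rw [sum_congr rfl (fun z hz => mu_adj G x p (by simpa using hz))]
  rw [sum_const, SimpleGraph.card_neighborFinset_eq_degree, nsmul_eq_mul]
  have : (G.degree x : ℝ) ≠ 0 := by exact_mod_cast hd.ne'
  field_simp
  ring

lemma x_mem_ball : x ∈ ball G x := mem_insert_self _ _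

end Basic

section Plans

variable {G : SimpleGraph V} [G.LocallyFinite] {x y : V} {p : ℝ} {π : V × V → ℝ}

lemma slice_finite_left (h : (Function.support π).Finite) (u : V) :
    (Function.support fun v => π (u, v)).Finite := by
  have : (Function.support fun v => π (u, v)) ⊆ (fun v => (u, v)) ⁻¹' Function.support π := by
    intro v hv; exact hv
  exact (h.preimage (fun a _ b _ hab => by simpa using congrArg Prod.snd hab)).subset this

lemma slice_finite_right (h : (Function.support π).Finite) (v : V) :
    (Function.support fun u => π (u, v)).Finite := by
  have : (Function.support fun u => π (u, v)) ⊆ (fun u => (u, v)) ⁻¹' Function.support π := by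
    intro u hu; exact hu
  exact (h.preimage (fun a _ b _ hab => by simpa using congrArg Prod.fst hab)).subset this

lemma plan_entry_le_left {μ1 μ2 : V → ℝ} (h : IsPlan π μ1 μ2) (u v : V) : π (u, v) ≤ μ1 u := by
  rw [← h.2.2.1 u]
  exact single_le_finsum v (slice_finite_left h.2.1 u) (fun w => (h.1 (u, w)).1)

lemma plan_entry_le_right {μ1 μ2 : V → ℝ} (h : IsPlan π μ1 μ2) (u v : V) : π (u, v) ≤ μ2 v := by
  rw [← h.2.2.2 v]
  exact single_le_finsum u (slice_finite_right h.2.1 v) (fun w => (h.1 (w, v)).1)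

lemma plan_supp (h : IsPlan π (mu G x p) (mu G y p)) {q : V × V}
    (hq : q ∉ ball G x ×ˢ ball G y) : π q = 0 := by
  rw [mem_product] at hq
  push_neg at hq
  rcases Classical.em (q.1 ∈ ball G x) with h1 | h1
  · have h2 := hq h1
    have := plan_entry_le_right h q.1 q.2
    have h0 := (h.1 q).1
    rw [mu_off G y p h2] at this
    have : π (q.1, q.2) = 0 := le_antisymm this (by simpa using h0)
    simpa using this
  · have := plan_entry_le_left h q.1 q.2
    have h0 := (h.1 q).1
    rw [mu_off G x p h1] at this
    have : π (q.1, q.2) = 0 := le_antisymm this (by simpa using h0)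
    simpa using this

lemma plan_marg_row (h : IsPlan π (mu G x p) (mu G y p)) (u : V) :
    ∑ v ∈ ball G y, π (u, v) = mu G x p u := by
  rw [← h.2.2.1 u]
  refine (finsum_eq_sum_of_support_subset _ ?_).symm
  intro v hv
  by_contra hv'
  exact hv (plan_supp h (fun hc => hv' (by simpa using (Finset.mem_product.mp hc).2)))

lemma plan_marg_col (h : IsPlan π (mu G x p) (mu G y p)) (v : V) :
    ∑ u ∈ ball G x, π (u, v) = mu G y p v := by
  rw [← h.2.2.2 v]
  refine (finsum_eq_sum_of_support_subset _ ?_).symm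
  intro u hu
  by_contra hu'
  exact hu (plan_supp h (fun hc => hu' (by simpa using (Finset.mem_product.mp hc).1)))

lemma cost_eq_sum (h : IsPlan π (mu G x p) (mu G y p)) :
    cost G π = ∑ q ∈ ball G x ×ˢ ball G y, (G.dist q.1 q.2 : ℝ) * π q := by
  refine finsum_eq_sum_of_support_subset _ ?_
  intro q hq
  by_contra hq'
  rw [Function.mem_support] at hq
  exact hq (by rw [plan_supp h hq', mul_zero])

lemma cost_nonneg (h0 : ∀ q, 0 ≤ π q) : 0 ≤ cost G π :=
  finsum_nonneg (fun q => mul_nonneg (Nat.cast_nonneg _) (h0 q))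

lemma W1_bddBelow {μ1 μ2 : V → ℝ} : BddBelow (cost G '' {π' | IsPlan π' μ1 μ2}) := by
  refine ⟨0, fun c hc => ?_⟩
  obtain ⟨π', hπ', rfl⟩ := hc
  exact cost_nonneg (fun q => (hπ'.1 q).1)

lemma W1_le (h : IsPlan π (mu G x p) (mu G y p)) :
    W1 G (mu G x p) (mu G y p) ≤ cost G π :=
  csInf_le W1_bddBelow ⟨π, h, rfl⟩

end Plans

section Lip

variable {G : SimpleGraph V}

lemma dist_cast_tri (hG : G.Connected) (a b c : V) :
    (G.dist a c : ℝ) ≤ (G.dist a b : ℝ) + (G.dist b c : ℝ) := by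
  exact_mod_cast hG.dist_triangle

lemma dist_cast_comm (a b : V) : (G.dist a b : ℝ) = (G.dist b a : ℝ) := by
  rw [SimpleGraph.dist_comm]

lemma lip_dist (hG : G.Connected) (v : V) : IsLip G (fun w => (G.dist v w : ℝ)) := by
  intro a b
  show |(G.dist v a : ℝ) - (G.dist v b : ℝ)| ≤ (G.dist a b : ℝ)
  rw [abs_sub_le_iff]
  constructor
  · have h1 := dist_cast_tri hG v b a
    rw [dist_cast_comm b a] at h1
    linarith
  · have h2 := dist_cast_tri hG v a b
    linarith

lemma lip_max {f g : V → ℝ} (hf : IsLip G f) (hg : IsLip G g) :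
    IsLip G (fun w => max (f w) (g w)) :=
  fun a b => le_trans (abs_max_sub_max_le_max _ _ _ _) (max_le (hf a b) (hg a b))

lemma lip_min {f g : V → ℝ} (hf : IsLip G f) (hg : IsLip G g) :
    IsLip G (fun w => min (f w) (g w)) :=
  fun a b => le_trans (abs_min_sub_min_le_max _ _ _ _) (max_le (hf a b) (hg a b))

lemma lip_const_sub {f : V → ℝ} (c : ℝ) (hf : IsLip G f) :
    IsLip G (fun w => c - f w) := by
  intro a b
  have h := hf b a
  show |c - f a - (c - f b)| ≤ _
  rw [show c - f a - (c - f b) = f b - f a by ring]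
  rw [dist_cast_comm a b]
  exact h

lemma lip_add_const {f : V → ℝ} (c : ℝ) (hf : IsLip G f) :
    IsLip G (fun w => f w + c) := by
  intro a b
  show |f a + c - (f b + c)| ≤ _
  rw [show f a + c - (f b + c) = f a - f b by ring]
  exact hf a b

lemma dist_self' (x : V) : G.dist x x = 0 := SimpleGraph.dist_self

lemma dist_adj {x y : V} (hxy : G.Adj x y) : G.dist x y = 1 :=
  SimpleGraph.dist_eq_one_iff_adj.mpr hxy

lemma dist_ge_two (hG : G.Connected) {x z : V} (hne : z ≠ x) (hna : ¬ G.Adj x z) :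
    2 ≤ G.dist x z := by
  have h0 : G.dist x z ≠ 0 := by
    intro h
    exact hne (((hG.dist_eq_zero_iff (u := x) (v := z))).mp h).symm
  have h1 : G.dist x z ≠ 1 := fun h => hna (SimpleGraph.dist_eq_one_iff_adj.mp h)
  omega

end Lip

section Dual

variable {G : SimpleGraph V} [G.LocallyFinite] {x y : V} {p : ℝ} {π : V × V → ℝ}

lemma dual_le_cost {φ : V → ℝ} (hφ : IsLip G φ) (h : IsPlan π (mu G x p) (mu G y p)) :
    ∑ u ∈ ball G x, φ u * mu G x p u - ∑ v ∈ ball G y, φ v * mu G y p v ≤ cost G π := by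
  have hrow : ∑ u ∈ ball G x, φ u * mu G x p u
      = ∑ q ∈ ball G x ×ˢ ball G y, φ q.1 * π q := by
    rw [Finset.sum_product]
    exact sum_congr rfl fun u _ => by rw [← plan_marg_row h u, mul_sum]
  have hcol : ∑ v ∈ ball G y, φ v * mu G y p v
      = ∑ q ∈ ball G x ×ˢ ball G y, φ q.2 * π q := by
    rw [Finset.sum_product_right]
    exact sum_congr rfl fun v _ => by rw [← plan_marg_col h v, mul_sum]
  rw [hrow, hcol, cost_eq_sum h, ← sum_sub_distrib]
  refine sum_le_sum fun q hq => ?_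
  rw [show φ q.1 * π q - φ q.2 * π q = (φ q.1 - φ q.2) * π q by ring]
  exact mul_le_mul_of_nonneg_right (le_trans (le_abs_self _) (hφ q.1 q.2)) ((h.1 q).1)

lemma dual_eq (hxy : G.Adj x y) (hdx : 0 < G.degree x) (hdy : 0 < G.degree y) {φ : V → ℝ}
    (hy0 : φ y = 0) (p : ℝ) :
    ∑ u ∈ ball G x, φ u * mu G x p u - ∑ v ∈ ball G y, φ v * mu G y p v
      = (p - (1 - p) / (G.degree y : ℝ)) * φ x
        + ((1 - p) / ((G.degree x : ℝ) * (G.degree y : ℝ))) * Fpot G x y φ := by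
  have hymem : y ∈ G.neighborFinset x := by simpa using hxy
  have hxmem : x ∈ G.neighborFinset y := by simpa using hxy.symm
  have hx1 : ∑ z ∈ G.neighborFinset x, φ z * mu G x p z
      = (φ y + ∑ z ∈ (G.neighborFinset x).erase y, φ z) * ((1 - p) / (G.degree x)) := by
    calc ∑ z ∈ G.neighborFinset x, φ z * mu G x p z
        = ∑ z ∈ G.neighborFinset x, φ z * ((1 - p) / (G.degree x)) :=
          sum_congr rfl fun z hz => by rw [mu_adj G x p (by simpa using hz)]
      _ = (∑ z ∈ G.neighborFinset x, φ z) * ((1 - p) / (G.degree x)) := by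
          rw [Finset.sum_mul]
      _ = _ := by rw [Finset.add_sum_erase _ φ hymem]
  have hy1 : ∑ z ∈ G.neighborFinset y, φ z * mu G y p z
      = (φ x + ∑ z ∈ (G.neighborFinset y).erase x, φ z) * ((1 - p) / (G.degree y)) := by
    calc ∑ z ∈ G.neighborFinset y, φ z * mu G y p z
        = ∑ z ∈ G.neighborFinset y, φ z * ((1 - p) / (G.degree y)) :=
          sum_congr rfl fun z hz => by rw [mu_adj G y p (by simpa using hz)]
      _ = (∑ z ∈ G.neighborFinset y, φ z) * ((1 - p) / (G.degree y)) := by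
          rw [Finset.sum_mul]
      _ = _ := by rw [Finset.add_sum_erase _ φ hxmem]
  rw [ball, ball, sum_insert (by simp), sum_insert (by simp), mu_self, mu_self, hx1, hy1, hy0]
  unfold Fpot
  have hdx' : (G.degree x : ℝ) ≠ 0 := Nat.cast_ne_zero.mpr hdx.ne'
  have hdy' : (G.degree y : ℝ) ≠ 0 := Nat.cast_ne_zero.mpr hdy.ne'
  field_simp
  ring

end Dual

def InC (G : SimpleGraph V) [G.LocallyFinite] (x y : V) (j : ℤ) (φ : V → ℝ) : Prop :=
  IsLip G φ ∧ (∀ w, ∃ n : ℤ, φ w = (n : ℝ)) ∧ φ x = (j : ℝ) ∧ φ y = 0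

lemma cIdle_eq (G : SimpleGraph V) [G.LocallyFinite] (x y : V) (j : ℤ) :
    cIdle G x y j = sSup (Fpot G x y '' {φ | InC G x y j φ}) := rfl

noncomputable def gap (G : SimpleGraph V) [G.LocallyFinite] (x y : V) : ℝ :=
  if G.degree y < G.degree x then ((G.degree x : ℝ) - G.degree y) else 0

section ClassC

variable {G : SimpleGraph V} [G.LocallyFinite] {x y : V}

lemma mem_C_base (hG : G.Connected) (hxy : G.Adj x y) {j : ℤ} (h1 : -1 ≤ j) (h2 : j ≤ 1) :
    InC G x y j (fun w => max ((j : ℝ) - G.dist x w) (0 - (G.dist y w : ℝ))) := by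
  refine ⟨lip_max (lip_const_sub _ (lip_dist hG x)) (lip_const_sub _ (lip_dist hG y)),
    fun w => ⟨max (j - (G.dist x w : ℤ)) (0 - (G.dist y w : ℤ)), by push_cast; ring_nf⟩, ?_, ?_⟩
  · beta_reduce
    have e1 : G.dist x x = 0 := dist_self' x
    have e2 : G.dist y x = 1 := dist_adj hxy.symm
    rw [e1, e2]
    norm_num
    exact_mod_cast h1
  · beta_reduce
    have e1 : G.dist x y = 1 := dist_adj hxy
    have e2 : G.dist y y = 0 := dist_self' y
    rw [e1, e2]
    norm_num
    exact_mod_cast h2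

lemma exists_mem_C (hG : G.Connected) (hxy : G.Adj x y) {j : ℤ} (h1 : -1 ≤ j) (h2 : j ≤ 1) :
    ∃ φ, InC G x y j φ := ⟨_, mem_C_base hG hxy h1 h2⟩

lemma inC_abs_le_two (hG : G.Connected) (hxy : G.Adj x y) {j : ℤ} {φ : V → ℝ}
    (hφ : InC G x y j φ) {z : V} (hz : G.Adj x z ∨ G.Adj y z) : |φ z| ≤ 2 := by
  have h := hφ.1 z y
  rw [hφ.2.2.2, sub_zero] at h
  rcases hz with hz | hz
  · have h2 : G.dist z y ≤ G.dist z x + G.dist x y := hG.dist_triangle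
    rw [dist_adj hz.symm, dist_adj hxy] at h2
    have : (G.dist z y : ℝ) ≤ 2 := by exact_mod_cast h2
    linarith
  · have : G.dist z y = 1 := dist_adj hz.symm
    rw [this] at h
    norm_num at h
    linarith [abs_nonneg (φ z), h]

lemma Fpot_le_bound (hG : G.Connected) (hxy : G.Adj x y) {j : ℤ} {φ : V → ℝ}
    (hφ : InC G x y j φ) :
    Fpot G x y φ ≤ 4 * (G.degree x : ℝ) * (G.degree y : ℝ) := by
  have hA : ∀ z ∈ (G.neighborFinset x).erase y, φ z ≤ 2 := fun z hz =>
    (abs_le.mp (inC_abs_le_two hG hxy hφ (Or.inl (by simpa using Finset.mem_of_mem_erase hz)))).2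
  have hB : ∀ z ∈ (G.neighborFinset y).erase x, -2 ≤ φ z := fun z hz =>
    (abs_le.mp (inC_abs_le_two hG hxy hφ (Or.inr (by simpa using Finset.mem_of_mem_erase hz)))).1
  have hS1 : ∑ z ∈ (G.neighborFinset x).erase y, φ z ≤ 2 * (G.degree x : ℝ) := by
    calc ∑ z ∈ (G.neighborFinset x).erase y, φ z
        ≤ ∑ _z ∈ (G.neighborFinset x).erase y, (2 : ℝ) := Finset.sum_le_sum hA
      _ = ((G.neighborFinset x).erase y).card * 2 := by rw [Finset.sum_const, nsmul_eq_mul]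
      _ ≤ (G.degree x : ℝ) * 2 := by
          have := Finset.card_erase_le (a := y) (s := G.neighborFinset x)
          have h2 : (((G.neighborFinset x).erase y).card : ℝ) ≤ (G.degree x : ℝ) := by
            rw [← SimpleGraph.card_neighborFinset_eq_degree]
            exact_mod_cast this
          nlinarith
      _ = 2 * (G.degree x : ℝ) := by ring
  have hS2 : -(2 * (G.degree y : ℝ)) ≤ ∑ z ∈ (G.neighborFinset y).erase x, φ z := by
    calc -(2 * (G.degree y : ℝ))
        ≤ -(((G.neighborFinset y).erase x).card * 2 : ℝ) := by
          have := Finset.card_erase_le (a := x) (s := G.neighborFinset y)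
          have h2 : ((((G.neighborFinset y).erase x).card : ℕ) : ℝ) ≤ (G.degree y : ℝ) := by
            rw [← SimpleGraph.card_neighborFinset_eq_degree]
            exact_mod_cast this
          nlinarith
      _ = ∑ _z ∈ (G.neighborFinset y).erase x, (-2 : ℝ) := by
          rw [Finset.sum_const, nsmul_eq_mul]; ring
      _ ≤ ∑ z ∈ (G.neighborFinset y).erase x, φ z := Finset.sum_le_sum hB
  unfold Fpot
  have hdx0 : (0 : ℝ) ≤ (G.degree x : ℝ) := Nat.cast_nonneg _
  have hdy0 : (0 : ℝ) ≤ (G.degree y : ℝ) := Nat.cast_nonneg _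
  nlinarith

lemma cIdle_bddAbove (hG : G.Connected) (hxy : G.Adj x y) (j : ℤ) :
    BddAbove (Fpot G x y '' {φ | InC G x y j φ}) := by
  refine ⟨4 * (G.degree x : ℝ) * (G.degree y : ℝ), fun r hr => ?_⟩
  obtain ⟨φ, hφ, rfl⟩ := hr
  exact Fpot_le_bound hG hxy hφ

lemma le_cIdle (hG : G.Connected) (hxy : G.Adj x y) {j : ℤ} {φ : V → ℝ}
    (hφ : InC G x y j φ) : Fpot G x y φ ≤ cIdle G x y j :=
  le_csSup (by exact cIdle_bddAbove hG hxy j) ⟨φ, hφ, rfl⟩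

lemma cIdle_le (hG : G.Connected) (hxy : G.Adj x y) {j : ℤ} {r : ℝ}
    (hne : ∃ φ, InC G x y j φ) (hr : ∀ φ, InC G x y j φ → Fpot G x y φ ≤ r) :
    cIdle G x y j ≤ r := by
  refine csSup_le ?_ ?_
  · obtain ⟨φ, hφ⟩ := hne; exact ⟨_, φ, hφ, rfl⟩
  · rintro s ⟨φ, hφ, rfl⟩; exact hr φ hφ

lemma step_up (hG : G.Connected) (hxy : G.Adj x y) {j : ℤ} (hj1 : -1 ≤ j) (hj2 : j ≤ 0)
    {φ : V → ℝ} (hφ : InC G x y j φ) :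
    ∃ ψ : V → ℝ, InC G x y (j + 1) ψ ∧ Fpot G x y φ + gap G x y ≤ Fpot G x y ψ := by
  obtain ⟨hLip, hInt, hx0, hy0⟩ := hφ
  have hymem : y ∈ G.neighborFinset x := by simpa using hxy
  have hxmem : x ∈ G.neighborFinset y := by simpa using hxy.symm
  by_cases hcase : G.degree x ≤ G.degree y
  · -- raise around x
    refine ⟨fun w => max (φ w) (((j : ℝ) + 1) - G.dist x w), ⟨?_, ?_, ?_, ?_⟩, ?_⟩
    · exact lip_max hLip (lip_const_sub _ (lip_dist hG x))
    · intro w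
      obtain ⟨n, hn⟩ := hInt w
      exact ⟨max n (j + 1 - (G.dist x w : ℤ)), by beta_reduce; rw [hn]; push_cast; ring_nf⟩
    · beta_reduce
      rw [dist_self' x, hx0]
      push_cast
      rw [max_eq_right (by linarith)]
      ring
    · beta_reduce
      rw [dist_adj hxy, hy0]
      have : (j : ℝ) ≤ 0 := by exact_mod_cast hj2
      push_cast
      rw [max_eq_left (by linarith)]
    · -- gain estimate
      have hgap : gap G x y = 0 := by unfold gap; rw [if_neg (not_lt.mpr hcase)]
      rw [hgap, add_zero]
      set ψ : V → ℝ := fun w => max (φ w) (((j : ℝ) + 1) - G.dist x w) with hψ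
      have hge : ∀ z, φ z ≤ ψ z := fun z => le_max_left _ _
      have hB0 : ∀ z ∈ (G.neighborFinset y).erase x, z ∉ G.neighborFinset x → ψ z = φ z := by
        intro z hz hzx
        have hz1 : z ≠ x := Finset.ne_of_mem_erase hz
        have hz2 : G.Adj y z := by simpa using Finset.mem_of_mem_erase hz
        have hd2 : 2 ≤ G.dist x z := dist_ge_two hG hz1 (fun h => hzx (by simpa using h))
        have hφz : -1 ≤ φ z := by
          have h := hLip z y
          rw [hy0, sub_zero, dist_adj hz2.symm] at h
          have := (abs_le.mp h).1
          norm_num at this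
          linarith
        have : ((j : ℝ) + 1) - G.dist x z ≤ φ z := by
          have hd2' : (2 : ℝ) ≤ G.dist x z := by exact_mod_cast hd2
          have hj' : (j : ℝ) ≤ 0 := by exact_mod_cast hj2
          linarith
        exact max_eq_left this
      have hfil : ∑ z ∈ (G.neighborFinset y).erase x, (ψ z - φ z)
          = ∑ z ∈ ((G.neighborFinset y).erase x).filter (· ∈ G.neighborFinset x),
              (ψ z - φ z) := by
        refine (Finset.sum_filter_of_ne ?_).symm
        intro z hz hne
        by_contra hzx
        exact hne (by rw [hB0 z hz hzx]; ring)
      have hsub : ((G.neighborFinset y).erase x).filter (· ∈ G.neighborFinset x)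
          ⊆ (G.neighborFinset x).erase y := by
        intro z hz
        rw [Finset.mem_filter] at hz
        refine Finset.mem_erase.mpr ⟨?_, hz.2⟩
        have : G.Adj y z := by simpa using Finset.mem_of_mem_erase hz.1
        exact this.ne'
      have hmono : ∑ z ∈ ((G.neighborFinset y).erase x).filter (· ∈ G.neighborFinset x),
          (ψ z - φ z) ≤ ∑ z ∈ (G.neighborFinset x).erase y, (ψ z - φ z) :=
        Finset.sum_le_sum_of_subset_of_nonneg hsub (fun z _ _ => by linarith [hge z])
      have hBnn : 0 ≤ ∑ z ∈ (G.neighborFinset y).erase x, (ψ z - φ z) :=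
        Finset.sum_nonneg fun z _ => by linarith [hge z]
      have hkey : (G.degree x : ℝ) * ∑ z ∈ (G.neighborFinset y).erase x, (ψ z - φ z)
          ≤ (G.degree y : ℝ) * ∑ z ∈ (G.neighborFinset x).erase y, (ψ z - φ z) := by
        have hc : (G.degree x : ℝ) ≤ (G.degree y : ℝ) := by exact_mod_cast hcase
        calc (G.degree x : ℝ) * ∑ z ∈ (G.neighborFinset y).erase x, (ψ z - φ z)
            ≤ (G.degree y : ℝ) * ∑ z ∈ (G.neighborFinset y).erase x, (ψ z - φ z) :=
              mul_le_mul_of_nonneg_right hc hBnn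
          _ ≤ (G.degree y : ℝ) * ∑ z ∈ (G.neighborFinset x).erase y, (ψ z - φ z) := by
              rw [hfil]
              exact mul_le_mul_of_nonneg_left hmono (Nat.cast_nonneg _)
      unfold Fpot
      have e1 : ∑ z ∈ (G.neighborFinset x).erase y, ψ z
          - ∑ z ∈ (G.neighborFinset x).erase y, φ z
          = ∑ z ∈ (G.neighborFinset x).erase y, (ψ z - φ z) := by
        rw [Finset.sum_sub_distrib]
      have e2 : ∑ z ∈ (G.neighborFinset y).erase x, ψ z
          - ∑ z ∈ (G.neighborFinset y).erase x, φ z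
          = ∑ z ∈ (G.neighborFinset y).erase x, (ψ z - φ z) := by
        rw [Finset.sum_sub_distrib]
      nlinarith [hkey, e1, e2]
  · -- lower around y
    push_neg at hcase
    refine ⟨fun w => min (φ w + 1) ((G.dist y w : ℝ)), ⟨?_, ?_, ?_, ?_⟩, ?_⟩
    · exact lip_min (lip_add_const _ hLip) (lip_dist hG y)
    · intro w
      obtain ⟨n, hn⟩ := hInt w
      exact ⟨min (n + 1) ((G.dist y w : ℤ)), by beta_reduce; rw [hn]; push_cast; ring_nf⟩
    · beta_reduce
      rw [dist_adj hxy.symm, hx0]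
      push_cast
      have hj' : (j : ℝ) + 1 ≤ 1 := by
        have : (j : ℝ) ≤ 0 := by exact_mod_cast hj2
        linarith
      rw [min_eq_left hj']
    · beta_reduce
      rw [dist_self' y, hy0]
      norm_num
    · -- gain estimate (lower around y)
      have hgap : gap G x y = ((G.degree x : ℝ) - G.degree y) := by
        unfold gap; rw [if_pos hcase]
      rw [hgap]
      set ψ : V → ℝ := fun w => min (φ w + 1) ((G.dist y w : ℝ)) with hψdef
      set A := (G.neighborFinset x).erase y with hAdef
      set B := (G.neighborFinset y).erase x with hBdef
      set C := A.filter (· ∈ G.neighborFinset y) with hCdef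
      have hle1 : ∀ z, ψ z - φ z ≤ 1 := fun z => by
        have : ψ z ≤ φ z + 1 := min_le_left _ _
        linarith
      have hA1 : ∀ z ∈ A, z ∉ G.neighborFinset y → ψ z - φ z = 1 := by
        intro z hz hzy
        have hz1 : z ≠ y := Finset.ne_of_mem_erase hz
        have hz2 : G.Adj x z := by simpa [hAdef] using Finset.mem_of_mem_erase hz
        have hd2 : 2 ≤ G.dist y z := dist_ge_two hG hz1 (fun h => hzy (by simpa using h))
        have hφz : φ z ≤ (j : ℝ) + 1 := by
          have h := hLip z x
          rw [hx0, dist_adj hz2.symm] at h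
          have := (abs_le.mp h).2
          norm_num at this
          linarith
        have hmin : φ z + 1 ≤ (G.dist y z : ℝ) := by
          have h2 : (2 : ℝ) ≤ G.dist y z := by exact_mod_cast hd2
          have hj' : (j : ℝ) ≤ 0 := by exact_mod_cast hj2
          linarith
        have : ψ z = φ z + 1 := min_eq_left hmin
        linarith
      have hCB : C ⊆ B := by
        intro z hz
        rw [hCdef, Finset.mem_filter] at hz
        have hz2 : G.Adj x z := by simpa [hAdef] using Finset.mem_of_mem_erase hz.1
        exact Finset.mem_erase.mpr ⟨hz2.ne', hz.2⟩
      have hcardsplit : (C.card : ℝ) + ((A.filter (fun z => ¬ z ∈ G.neighborFinset y)).card : ℝ)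
          = (A.card : ℝ) := by
        exact_mod_cast congrArg (Nat.cast (R := ℝ))
          (Finset.card_filter_add_card_filter_not (s := A)
            (p := (· ∈ G.neighborFinset y)))
      have hsplitA : ∑ z ∈ A, (ψ z - φ z)
          = ∑ z ∈ C, (ψ z - φ z) + ((A.card : ℝ) - C.card) := by
        rw [← Finset.sum_filter_add_sum_filter_not A (· ∈ G.neighborFinset y)
          (fun z => ψ z - φ z)]
        have h2 : ∑ z ∈ A.filter (fun z => ¬ z ∈ G.neighborFinset y), (ψ z - φ z)
            = ((A.filter (fun z => ¬ z ∈ G.neighborFinset y)).card : ℝ) := by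
          rw [Finset.sum_congr rfl (fun z hz => hA1 z (Finset.mem_filter.mp hz).1
            (Finset.mem_filter.mp hz).2), Finset.sum_const, nsmul_eq_mul, mul_one]
        rw [h2, ← hCdef]
        linarith
      have hsplitB : ∑ z ∈ B, (ψ z - φ z)
          = ∑ z ∈ C, (ψ z - φ z) + ∑ z ∈ B \ C, (ψ z - φ z) := by
        rw [← Finset.sum_sdiff hCB]
        ring
      have hcardBC : ((B \ C).card : ℝ) = (B.card : ℝ) - C.card := by
        rw [Finset.card_sdiff_of_subset hCB]
        have := Finset.card_le_card hCB
        push_cast [Nat.cast_sub this]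
        ring
      have hBC : ∑ z ∈ B \ C, (ψ z - φ z) ≤ (B.card : ℝ) - C.card := by
        calc ∑ z ∈ B \ C, (ψ z - φ z) ≤ ∑ _z ∈ B \ C, (1 : ℝ) :=
              Finset.sum_le_sum (fun z _ => hle1 z)
          _ = ((B \ C).card : ℝ) := by rw [Finset.sum_const, nsmul_eq_mul, mul_one]
          _ = (B.card : ℝ) - C.card := hcardBC
      have hCle : ∑ z ∈ C, (ψ z - φ z) ≤ (C.card : ℝ) := by
        calc ∑ z ∈ C, (ψ z - φ z) ≤ ∑ _z ∈ C, (1 : ℝ) :=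
              Finset.sum_le_sum (fun z _ => hle1 z)
          _ = (C.card : ℝ) := by rw [Finset.sum_const, nsmul_eq_mul, mul_one]
      have hcardA : (A.card : ℝ) = (G.degree x : ℝ) - 1 := by
        rw [hAdef, Finset.card_erase_of_mem hymem]
        have h1 : 1 ≤ (G.neighborFinset x).card := Finset.card_pos.mpr ⟨y, hymem⟩
        push_cast [Nat.cast_sub h1]
        rw [SimpleGraph.card_neighborFinset_eq_degree]
      have hcardB : (B.card : ℝ) = (G.degree y : ℝ) - 1 := by
        rw [hBdef, Finset.card_erase_of_mem hxmem]
        have h1 : 1 ≤ (G.neighborFinset y).card := Finset.card_pos.mpr ⟨x, hxmem⟩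
        push_cast [Nat.cast_sub h1]
        rw [SimpleGraph.card_neighborFinset_eq_degree]
      have hdx0 : (0 : ℝ) ≤ (G.degree x : ℝ) := Nat.cast_nonneg _
      have hdy0 : (0 : ℝ) ≤ (G.degree y : ℝ) := Nat.cast_nonneg _
      have hcase' : (G.degree y : ℝ) < (G.degree x : ℝ) := by exact_mod_cast hcase
      have p1 : (G.degree y : ℝ) * ∑ z ∈ A, (ψ z - φ z)
          = (G.degree y : ℝ) * ∑ z ∈ C, (ψ z - φ z)
            + (G.degree y : ℝ) * (G.degree x : ℝ) - (G.degree y : ℝ)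
            - (G.degree y : ℝ) * (C.card : ℝ) := by
        rw [hsplitA, hcardA]; ring
      have p2 : (G.degree x : ℝ) * ∑ z ∈ B, (ψ z - φ z)
          ≤ (G.degree x : ℝ) * ∑ z ∈ C, (ψ z - φ z)
            + (G.degree x : ℝ) * (G.degree y : ℝ) - (G.degree x : ℝ)
            - (G.degree x : ℝ) * (C.card : ℝ) := by
        have h3 : ∑ z ∈ B, (ψ z - φ z)
            ≤ ∑ z ∈ C, (ψ z - φ z) + ((G.degree y : ℝ) - 1 - (C.card : ℝ)) := by
          rw [hsplitB]
          have := hBC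
          rw [hcardB] at this
          linarith
        calc (G.degree x : ℝ) * ∑ z ∈ B, (ψ z - φ z)
            ≤ (G.degree x : ℝ) * (∑ z ∈ C, (ψ z - φ z)
                + ((G.degree y : ℝ) - 1 - (C.card : ℝ))) :=
              mul_le_mul_of_nonneg_left h3 hdx0
          _ = _ := by ring
      have p3 : ((G.degree y : ℝ) - (G.degree x : ℝ)) * (C.card : ℝ)
          ≤ ((G.degree y : ℝ) - (G.degree x : ℝ)) * ∑ z ∈ C, (ψ z - φ z) :=
        mul_le_mul_of_nonpos_left hCle (by linarith)
      have e1 : ∑ z ∈ A, ψ z - ∑ z ∈ A, φ z = ∑ z ∈ A, (ψ z - φ z) := by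
        rw [Finset.sum_sub_distrib]
      have e2 : ∑ z ∈ B, ψ z - ∑ z ∈ B, φ z = ∑ z ∈ B, (ψ z - φ z) := by
        rw [Finset.sum_sub_distrib]
      unfold Fpot
      rw [← hAdef, ← hBdef]
      nlinarith [p1, p2, p3, e1, e2]


lemma cIdle_step (hG : G.Connected) (hxy : G.Adj x y) {j : ℤ} (hj1 : -1 ≤ j) (hj2 : j ≤ 0) :
    cIdle G x y j + gap G x y ≤ cIdle G x y (j + 1) := by
  have h : cIdle G x y j ≤ cIdle G x y (j + 1) - gap G x y := by
    refine cIdle_le hG hxy (exists_mem_C hG hxy hj1 (by linarith)) (fun φ hφ => ?_)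
    obtain ⟨ψ, hψ, hgain⟩ := step_up hG hxy hj1 hj2 hφ
    have h2 := le_cIdle hG hxy hψ
    linarith
  linarith

lemma fIdle_step (hG : G.Connected) (hxy : G.Adj x y) (hdx : 0 < G.degree x)
    (hdy : 0 < G.degree y) {j : ℤ} (hj1 : -1 ≤ j) (hj2 : j ≤ 0) :
    fIdle G x y j (1 / ((max (G.degree x) (G.degree y) : ℝ) + 1))
      ≤ fIdle G x y (j + 1) (1 / ((max (G.degree x) (G.degree y) : ℝ) + 1)) := by
  set Dr : ℝ := (max (G.degree x) (G.degree y) : ℝ) with hDr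
  set p0 : ℝ := 1 / (Dr + 1) with hp0
  have hdx' : (G.degree x : ℝ) ≠ 0 := Nat.cast_ne_zero.mpr hdx.ne'
  have hdy' : (G.degree y : ℝ) ≠ 0 := Nat.cast_ne_zero.mpr hdy.ne'
  have hDr1 : (1 : ℝ) ≤ Dr := by
    rw [hDr]
    exact_mod_cast Nat.one_le_iff_ne_zero.mpr (by positivity : 0 < max (G.degree x) (G.degree y)).ne'
  have hD0 : (0 : ℝ) < Dr + 1 := by linarith
  have hp0nn : 0 ≤ 1 - p0 := by
    rw [hp0, sub_nonneg]
    rw [div_le_one hD0]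
    linarith
  have hB0 : 0 ≤ (1 - p0) / ((G.degree x : ℝ) * G.degree y) := by
    apply div_nonneg hp0nn
    positivity
  have hstep := cIdle_step hG hxy hj1 hj2
  have hkey : (p0 - (1 - p0) / (G.degree y : ℝ))
      + ((1 - p0) / ((G.degree x : ℝ) * G.degree y)) * gap G x y = 0 := by
    have hD' : Dr + 1 ≠ 0 := hD0.ne'
    by_cases hc : G.degree y < G.degree x
    · have hmax : Dr = (G.degree x : ℝ) := by
        rw [hDr]
        exact max_eq_left (by exact_mod_cast hc.le)
      unfold gap
      rw [if_pos hc, hp0, hmax]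
      field_simp
      ring
    · have hmax : Dr = (G.degree y : ℝ) := by
        rw [hDr]
        exact max_eq_right (by exact_mod_cast (not_lt.mp hc))
      unfold gap
      rw [if_neg hc, hp0, hmax]
      field_simp
      ring
  have hmul : ((1 - p0) / ((G.degree x : ℝ) * G.degree y)) * (cIdle G x y j + gap G x y)
      ≤ ((1 - p0) / ((G.degree x : ℝ) * G.degree y)) * cIdle G x y (j + 1) :=
    mul_le_mul_of_nonneg_left hstep hB0
  unfold fIdle
  push_cast
  nlinarith [hmul, hkey]

lemma fIdle_chain (hG : G.Connected) (hxy : G.Adj x y) (hdx : 0 < G.degree x)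
    (hdy : 0 < G.degree y) {j : ℤ} (hj : j = -1 ∨ j = 0 ∨ j = 1) :
    fIdle G x y j (1 / ((max (G.degree x) (G.degree y) : ℝ) + 1))
      ≤ fIdle G x y 1 (1 / ((max (G.degree x) (G.degree y) : ℝ) + 1)) := by
  rcases hj with rfl | rfl | rfl
  · have h1 := fIdle_step hG hxy hdx hdy (by norm_num : (-1 : ℤ) ≤ -1) (by norm_num)
    have h2 := fIdle_step hG hxy hdx hdy (by norm_num : (-1 : ℤ) ≤ 0) (le_refl 0)
    norm_num at h1 h2 ⊢
    linarith
  · have h2 := fIdle_step hG hxy hdx hdy (by norm_num : (-1 : ℤ) ≤ 0) (le_refl 0)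
    norm_num at h2 ⊢
    linarith
  · exact le_refl _

end ClassC

section Attain

variable {G : SimpleGraph V} [G.LocallyFinite] {x y : V} {p : ℝ}

def PlanF (G : SimpleGraph V) [G.LocallyFinite] (x y : V) (p : ℝ) : Set (V × V → ℝ) :=
  {π | (∀ q, 0 ≤ π q) ∧ (∀ q, q ∉ ball G x ×ˢ ball G y → π q = 0) ∧
    (∀ u ∈ ball G x, ∑ v ∈ ball G y, π (u, v) = mu G x p u) ∧
    (∀ v ∈ ball G y, ∑ u ∈ ball G x, π (u, v) = mu G y p v)}

noncomputable def pcost (G : SimpleGraph V) [G.LocallyFinite] (x y : V) (π : V × V → ℝ) : ℝ :=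
  ∑ q ∈ ball G x ×ˢ ball G y, (G.dist q.1 q.2 : ℝ) * π q

lemma planF_entry_le_one (hdx : 0 < G.degree x) (hp : 0 ≤ p) (hp1 : p ≤ 1)
    {π : V × V → ℝ} (h : π ∈ PlanF G x y p) (q : V × V) : π q ≤ 1 := by
  obtain ⟨h0, hsupp, hrow, hcol⟩ := h
  by_cases hq : q ∈ ball G x ×ˢ ball G y
  · have hq1 : q.1 ∈ ball G x := (Finset.mem_product.mp hq).1
    have hq2 : q.2 ∈ ball G y := (Finset.mem_product.mp hq).2
    have hle : π (q.1, q.2) ≤ ∑ v ∈ ball G y, π (q.1, v) :=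
      Finset.single_le_sum (fun v _ => h0 _) hq2
    rw [hrow _ hq1] at hle
    calc π q = π (q.1, q.2) := by rw [Prod.mk.eta]
      _ ≤ mu G x p q.1 := hle
      _ ≤ 1 := mu_le_one G x p hdx hp hp1 _
  · rw [hsupp q hq]; norm_num

lemma isPlan_of_planF (hdx : 0 < G.degree x) (hp : 0 ≤ p) (hp1 : p ≤ 1)
    {π : V × V → ℝ} (h : π ∈ PlanF G x y p) : IsPlan π (mu G x p) (mu G y p) := by
  obtain ⟨h0, hsupp, hrow, hcol⟩ := h
  have hfin : (Function.support π).Finite := by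
    refine Set.Finite.subset (ball G x ×ˢ ball G y).finite_toSet (fun q hq => ?_)
    by_contra h'
    exact hq (hsupp q (by simpa using h'))
  refine ⟨fun q => ⟨h0 q, planF_entry_le_one hdx hp hp1 ⟨h0, hsupp, hrow, hcol⟩ q⟩, hfin, ?_, ?_⟩
  · intro u
    by_cases hu : u ∈ ball G x
    · rw [← hrow u hu]
      refine finsum_eq_sum_of_support_subset _ (fun v hv => ?_)
      rw [Function.mem_support] at hv
      by_contra hv'
      exact hv (hsupp (u, v) (fun hc => hv' (by simpa using (Finset.mem_product.mp hc).2)))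
    · rw [mu_off G x p hu]
      apply finsum_eq_zero_of_forall_eq_zero
      intro v
      exact hsupp (u, v) (fun hc => hu (by simpa using (Finset.mem_product.mp hc).1))
  · intro v
    by_cases hv : v ∈ ball G y
    · rw [← hcol v hv]
      refine finsum_eq_sum_of_support_subset _ (fun u hu => ?_)
      rw [Function.mem_support] at hu
      by_contra hu'
      exact hu (hsupp (u, v) (fun hc => hu' (by simpa using (Finset.mem_product.mp hc).1)))
    · rw [mu_off G y p hv]
      apply finsum_eq_zero_of_forall_eq_zero
      intro u
      exact hsupp (u, v) (fun hc => hv (by simpa using (Finset.mem_product.mp hc).2))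

lemma planF_of_isPlan {π : V × V → ℝ} (h : IsPlan π (mu G x p) (mu G y p)) :
    π ∈ PlanF G x y p :=
  ⟨fun q => (h.1 q).1, fun q hq => plan_supp h hq, fun u _ => plan_marg_row h u,
    fun v _ => plan_marg_col h v⟩

lemma cost_eq_pcost {π : V × V → ℝ} (h : IsPlan π (mu G x p) (mu G y p)) :
    cost G π = pcost G x y π := cost_eq_sum h

lemma prod_mem_planF (hdx : 0 < G.degree x) (hdy : 0 < G.degree y) (hp : 0 ≤ p) (hp1 : p ≤ 1) :
    (fun q : V × V => mu G x p q.1 * mu G y p q.2) ∈ PlanF G x y p := by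
  refine ⟨fun q => mul_nonneg (mu_nonneg G x p hp hp1 _) (mu_nonneg G y p hp hp1 _),
    fun q hq => ?_, fun u hu => ?_, fun v hv => ?_⟩
  · beta_reduce
    rw [Finset.mem_product] at hq
    push_neg at hq
    by_cases h1 : q.1 ∈ ball G x
    · rw [mu_off G y p (hq h1), mul_zero]
    · rw [mu_off G x p h1, zero_mul]
  · show ∑ v ∈ ball G y, mu G x p u * mu G y p v = mu G x p u
    rw [← Finset.mul_sum, mu_sum G y p hdy, mul_one]
  · show ∑ u ∈ ball G x, mu G x p u * mu G y p v = mu G y p v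
    rw [← Finset.sum_mul, mu_sum G x p hdx, one_mul]

lemma exists_min_plan (hdx : 0 < G.degree x) (hdy : 0 < G.degree y) (hp : 0 ≤ p) (hp1 : p ≤ 1) :
    ∃ π₀ ∈ PlanF G x y p, ∀ π ∈ PlanF G x y p, pcost G x y π₀ ≤ pcost G x y π := by
  have hsub : PlanF G x y p ⊆ Set.pi Set.univ (fun _ : V × V => Set.Icc (0 : ℝ) 1) := by
    intro π hπ q _
    exact ⟨hπ.1 q, planF_entry_le_one hdx hp hp1 hπ q⟩
  have hclosed : IsClosed (PlanF G x y p) := by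
    have h0 : IsClosed {π : V × V → ℝ | ∀ q, 0 ≤ π q} := by
      have : {π : V × V → ℝ | ∀ q, 0 ≤ π q} = ⋂ q, {π | 0 ≤ π q} := by
        ext π; simp [Set.mem_iInter]
      rw [this]
      exact isClosed_iInter fun q => isClosed_le continuous_const (continuous_apply q)
    have h1 : IsClosed {π : V × V → ℝ | ∀ q, q ∉ ball G x ×ˢ ball G y → π q = 0} := by
      have : {π : V × V → ℝ | ∀ q, q ∉ ball G x ×ˢ ball G y → π q = 0}
          = ⋂ q, {π | q ∉ ball G x ×ˢ ball G y → π q = 0} := by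
        ext π; simp [Set.mem_iInter]
      rw [this]
      refine isClosed_iInter fun q => ?_
      by_cases hq : q ∈ ball G x ×ˢ ball G y
      · have : {π : V × V → ℝ | q ∉ ball G x ×ˢ ball G y → π q = 0} = Set.univ := by
          ext π; simp [hq]
        rw [this]; exact isClosed_univ
      · have : {π : V × V → ℝ | q ∉ ball G x ×ˢ ball G y → π q = 0} = {π | π q = 0} := by
          ext π; simp [hq]
        rw [this]; exact isClosed_eq (continuous_apply q) continuous_const
    have h2 : IsClosed {π : V × V → ℝ | ∀ u ∈ ball G x,
        ∑ v ∈ ball G y, π (u, v) = mu G x p u} := by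
      have : {π : V × V → ℝ | ∀ u ∈ ball G x, ∑ v ∈ ball G y, π (u, v) = mu G x p u}
          = ⋂ u ∈ ball G x, {π | ∑ v ∈ ball G y, π (u, v) = mu G x p u} := by
        ext π; simp [Set.mem_iInter]
      rw [this]
      refine isClosed_biInter fun u _ => ?_
      exact isClosed_eq (continuous_finset_sum _ fun v _ => continuous_apply (u, v))
        continuous_const
    have h3 : IsClosed {π : V × V → ℝ | ∀ v ∈ ball G y,
        ∑ u ∈ ball G x, π (u, v) = mu G y p v} := by
      have : {π : V × V → ℝ | ∀ v ∈ ball G y, ∑ u ∈ ball G x, π (u, v) = mu G y p v}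
          = ⋂ v ∈ ball G y, {π | ∑ u ∈ ball G x, π (u, v) = mu G y p v} := by
        ext π; simp [Set.mem_iInter]
      rw [this]
      refine isClosed_biInter fun v _ => ?_
      exact isClosed_eq (continuous_finset_sum _ fun u _ => continuous_apply (u, v))
        continuous_const
    have : PlanF G x y p
        = {π : V × V → ℝ | ∀ q, 0 ≤ π q}
          ∩ ({π | ∀ q, q ∉ ball G x ×ˢ ball G y → π q = 0}
          ∩ ({π | ∀ u ∈ ball G x, ∑ v ∈ ball G y, π (u, v) = mu G x p u}
          ∩ {π | ∀ v ∈ ball G y, ∑ u ∈ ball G x, π (u, v) = mu G y p v})) := by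
      ext π
      simp only [PlanF, Set.mem_setOf_eq, Set.mem_inter_iff]
    rw [this]
    exact h0.inter (h1.inter (h2.inter h3))
  have hcompact : IsCompact (PlanF G x y p) :=
    IsCompact.of_isClosed_subset (isCompact_univ_pi fun _ => isCompact_Icc) hclosed hsub
  have hne : (PlanF G x y p).Nonempty := ⟨_, prod_mem_planF hdx hdy hp hp1⟩
  have hcont : Continuous (pcost G x y) := by
    apply continuous_finset_sum
    intro q _
    exact continuous_const.mul (continuous_apply q)
  obtain ⟨π₀, hπ₀, hmin⟩ := hcompact.exists_isMinOn hne hcont.continuousOn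
  exact ⟨π₀, hπ₀, fun π hπ => hmin hπ⟩

end Attain

section Residual

inductive Reach (c : V → V → ℤ) (B : Finset V) (y : V) : V → ℤ → Prop
  | base : Reach c B y y 0
  | step {v : V} {W : ℤ} {v' : V} : Reach c B y v W → v' ∈ B → Reach c B y v' (W + c v v')

lemma reach_mem {c : V → V → ℤ} {B : Finset V} {y v : V} {W : ℤ} (hy : y ∈ B)
    (h : Reach c B y v W) : v ∈ B := by
  induction h with
  | base => exact hy
  | step h hv' ih => exact hv'

lemma sum_ind_row (B : Finset V) {b : V} (hb : b ∈ B) (u u₀ : V) :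
    ∑ v'' ∈ B, (if (u, v'') = (u₀, b) then (1 : ℝ) else 0) = if u = u₀ then 1 else 0 := by
  by_cases h : u = u₀
  · subst h
    have he : ∀ v'' ∈ B, (if ((u : V), v'') = (u, b) then (1 : ℝ) else 0)
        = (if v'' = b then (1 : ℝ) else 0) := fun v'' _ => by simp [Prod.ext_iff]
    rw [Finset.sum_congr rfl he]
    simp [hb]
  · rw [if_neg h]
    apply Finset.sum_eq_zero
    intro v'' _
    simp [Prod.ext_iff, h]

lemma sum_ind_col (A : Finset V) {u₀ : V} (hu₀ : u₀ ∈ A) (v'' b : V) :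
    ∑ u ∈ A, (if (u, v'') = (u₀, b) then (1 : ℝ) else 0) = if v'' = b then 1 else 0 := by
  by_cases h : v'' = b
  · subst h
    have he : ∀ u ∈ A, (if (u, (v'' : V)) = (u₀, v'') then (1 : ℝ) else 0)
        = (if u = u₀ then (1 : ℝ) else 0) := fun u _ => by simp [Prod.ext_iff]
    rw [Finset.sum_congr rfl he]
    simp [hu₀]
  · rw [if_neg h]
    apply Finset.sum_eq_zero
    intro u _
    simp [Prod.ext_iff, h]

lemma sum_dist_ind {G : SimpleGraph V} (A B : Finset V) {u₀ b : V} (hu₀ : u₀ ∈ A) (hb : b ∈ B) :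
    ∑ q ∈ A ×ˢ B, (G.dist q.1 q.2 : ℝ) * (if q = (u₀, b) then (1 : ℝ) else 0)
      = (G.dist u₀ b : ℝ) := by
  have h1 : ∀ q ∈ A ×ˢ B, (G.dist q.1 q.2 : ℝ) * (if q = (u₀, b) then (1 : ℝ) else 0)
      = if q = (u₀, b) then (G.dist u₀ b : ℝ) else 0 := by
    intro q _
    by_cases h : q = (u₀, b)
    · subst h; simp
    · simp [h]
  rw [Finset.sum_congr rfl h1, Finset.sum_ite_eq' (A ×ˢ B) (u₀, b) (fun _ => (G.dist u₀ b : ℝ))]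
  rw [if_pos (Finset.mem_product.mpr ⟨hu₀, hb⟩)]

noncomputable def resC (G : SimpleGraph V) [G.LocallyFinite] (x : V) (π₀ : V × V → ℝ)
    (v v' : V) : ℤ :=
  if h : ((ball G x).filter (fun u => 0 < π₀ (u, v'))).Nonempty then
    (((ball G x).filter (fun u => 0 < π₀ (u, v'))).image
      (fun u => (G.dist u v : ℤ) - (G.dist u v' : ℤ))).min' (h.image _)
  else 0

variable {G : SimpleGraph V} [G.LocallyFinite] {x y : V} {π₀ : V × V → ℝ}

lemma resC_le {u v v' : V} (hu : u ∈ ball G x) (hpos : 0 < π₀ (u, v')) :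
    resC G x π₀ v v' ≤ (G.dist u v : ℤ) - (G.dist u v' : ℤ) := by
  have hne : ((ball G x).filter (fun u => 0 < π₀ (u, v'))).Nonempty :=
    ⟨u, Finset.mem_filter.mpr ⟨hu, hpos⟩⟩
  rw [resC, dif_pos hne]
  exact Finset.min'_le _ _ (Finset.mem_image_of_mem _ (Finset.mem_filter.mpr ⟨hu, hpos⟩))

lemma resC_attained {v' : V} (hcol : ∃ u ∈ ball G x, 0 < π₀ (u, v')) (v : V) :
    ∃ u ∈ ball G x, 0 < π₀ (u, v') ∧
      resC G x π₀ v v' = (G.dist u v : ℤ) - (G.dist u v' : ℤ) := by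
  obtain ⟨u1, hu1, hpos1⟩ := hcol
  have hne : ((ball G x).filter (fun u => 0 < π₀ (u, v'))).Nonempty :=
    ⟨u1, Finset.mem_filter.mpr ⟨hu1, hpos1⟩⟩
  have hmem := Finset.min'_mem _ (hne.image (fun u => (G.dist u v : ℤ) - (G.dist u v' : ℤ)))
  rw [Finset.mem_image] at hmem
  obtain ⟨u, hu, he⟩ := hmem
  rw [Finset.mem_filter] at hu
  exact ⟨u, hu.1, hu.2, by rw [resC, dif_pos hne, ← he]⟩

end Residual

section Pert

variable {G : SimpleGraph V} [G.LocallyFinite] {x y : V} {π₀ : V × V → ℝ}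

lemma reach_pert (hcol : ∀ v' ∈ ball G y, ∃ u ∈ ball G x, 0 < π₀ (u, v'))
    {v : V} {W : ℤ} (h : Reach (resC G x π₀) (ball G y) y v W) :
    ∃ η : V × V → ℝ,
      (∀ q, q ∉ ball G x ×ˢ ball G y → η q = 0) ∧
      (∀ u ∈ ball G x, ∑ v'' ∈ ball G y, η (u, v'') = 0) ∧
      (∀ v'' ∈ ball G y, ∑ u ∈ ball G x, η (u, v'')
        = (if v'' = y then (1 : ℝ) else 0) - (if v'' = v then (1 : ℝ) else 0)) ∧
      (∑ q ∈ ball G x ×ˢ ball G y, (G.dist q.1 q.2 : ℝ) * η q ≤ (W : ℝ)) ∧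
      (∀ q, η q < 0 → 0 < π₀ q) := by
  have hy : y ∈ ball G y := Finset.mem_insert_self _ _
  induction h with
  | base =>
      refine ⟨0, fun q _ => rfl, fun u _ => by simp, fun v'' _ => by simp, by simp, fun q hq => ?_⟩
      simp at hq
  | @step v W v' h hv' ih =>
      obtain ⟨η, hsupp, hrow, hcolsum, hcost, hneg⟩ := ih
      have hvB : v ∈ ball G y := reach_mem hy h
      obtain ⟨u₀, hu₀A, hu₀pos, hc⟩ := resC_attained (hcol v' hv') v
      refine ⟨fun q => η q + ((if q = (u₀, v) then (1 : ℝ) else 0)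
        - (if q = (u₀, v') then (1 : ℝ) else 0)), ?_, ?_, ?_, ?_, ?_⟩
      · intro q hq
        have h1 : q ≠ (u₀, v) := by
          rintro rfl
          exact hq (Finset.mem_product.mpr ⟨hu₀A, hvB⟩)
        have h2 : q ≠ (u₀, v') := by
          rintro rfl
          exact hq (Finset.mem_product.mpr ⟨hu₀A, hv'⟩)
        beta_reduce
        rw [hsupp q hq, if_neg h1, if_neg h2]
        ring
      · intro u hu
        beta_reduce
        rw [Finset.sum_add_distrib, Finset.sum_sub_distrib, hrow u hu,
          sum_ind_row (ball G y) hvB u u₀, sum_ind_row (ball G y) hv' u u₀]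
        ring
      · intro v'' hv''
        beta_reduce
        rw [Finset.sum_add_distrib, Finset.sum_sub_distrib, hcolsum v'' hv'',
          sum_ind_col (ball G x) hu₀A v'' v, sum_ind_col (ball G x) hu₀A v'' v']
        ring
      · have hexp : ∀ q ∈ ball G x ×ˢ ball G y,
            (G.dist q.1 q.2 : ℝ) * (η q + ((if q = (u₀, v) then (1 : ℝ) else 0)
              - (if q = (u₀, v') then (1 : ℝ) else 0)))
            = (G.dist q.1 q.2 : ℝ) * η q
              + ((G.dist q.1 q.2 : ℝ) * (if q = (u₀, v) then (1 : ℝ) else 0)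
              - (G.dist q.1 q.2 : ℝ) * (if q = (u₀, v') then (1 : ℝ) else 0)) := by
          intro q _; ring
        beta_reduce
        rw [Finset.sum_congr rfl hexp, Finset.sum_add_distrib, Finset.sum_sub_distrib,
          sum_dist_ind (ball G x) (ball G y) hu₀A hvB,
          sum_dist_ind (ball G x) (ball G y) hu₀A hv']
        have hcR : (G.dist u₀ v : ℝ) - (G.dist u₀ v' : ℝ) = ((resC G x π₀ v v' : ℤ) : ℝ) := by
          rw [hc]; push_cast; ring
        push_cast
        push_cast at hcost
        linarith [hcost, hcR.symm.le, hcR.le]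
      · intro q hq
        have hq' : η q + ((if q = (u₀, v) then (1 : ℝ) else 0)
            - (if q = (u₀, v') then (1 : ℝ) else 0)) < 0 := hq
        by_cases h2 : q = (u₀, v')
        · subst h2; exact hu₀pos
        · by_cases h1 : q = (u₀, v)
          · rw [if_pos h1, if_neg h2] at hq'
            exact hneg _ (by linarith)
          · rw [if_neg h1, if_neg h2] at hq'
            exact hneg _ (by linarith)

end Pert

section NoNegCycle

variable {G : SimpleGraph V} [G.LocallyFinite] {x y : V} {p : ℝ} {π₀ : V × V → ℝ}

lemma reach_nonneg (hmem : π₀ ∈ PlanF G x y p)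
    (hopt : ∀ π ∈ PlanF G x y p, pcost G x y π₀ ≤ pcost G x y π)
    (hcol : ∀ v' ∈ ball G y, ∃ u ∈ ball G x, 0 < π₀ (u, v'))
    {W : ℤ} (h : Reach (resC G x π₀) (ball G y) y y W) : (0 : ℤ) ≤ W := by
  obtain ⟨η, hsupp, hrow, hcolsum, hcost, hneg⟩ := reach_pert hcol h
  obtain ⟨hπ0, hπsupp, hπrow, hπcol⟩ := hmem
  have hcol0 : ∀ v'' ∈ ball G y, ∑ u ∈ ball G x, η (u, v'') = 0 := by
    intro v'' hv''
    rw [hcolsum v'' hv'']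
    ring
  have hS : 0 ≤ ∑ q ∈ ball G x ×ˢ ball G y, (G.dist q.1 q.2 : ℝ) * η q := by
    by_cases hTne : ∃ q, η q < 0
    · set T := (ball G x ×ˢ ball G y).filter (fun q => η q < 0) with hT
      have hTmem : ∀ q, η q < 0 → q ∈ T := by
        intro q hq
        refine Finset.mem_filter.mpr ⟨?_, hq⟩
        by_contra hq'
        rw [hsupp q hq'] at hq
        exact lt_irrefl 0 hq
      have hTne' : T.Nonempty := by
        obtain ⟨q, hq⟩ := hTne
        exact ⟨q, hTmem q hq⟩
      set ε := (T.image (fun q => π₀ q / (-η q))).min' (hTne'.image _) with hε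
      have hεpos : 0 < ε := by
        have hmm := Finset.min'_mem _ (hTne'.image (fun q => π₀ q / (-η q)))
        rw [Finset.mem_image] at hmm
        obtain ⟨q, hqT, he⟩ := hmm
        have hqneg : η q < 0 := (Finset.mem_filter.mp hqT).2
        rw [hε, ← he]
        exact div_pos (hneg q hqneg) (by linarith)
      have hεle : ∀ q, η q < 0 → ε * (-η q) ≤ π₀ q := by
        intro q hq
        have h1 : ε ≤ π₀ q / (-η q) :=
          Finset.min'_le _ _ (Finset.mem_image_of_mem _ (hTmem q hq))
        rw [le_div_iff₀ (by linarith : (0:ℝ) < -η q)] at h1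
        exact h1
      have hπ'mem : (fun q => π₀ q + ε * η q) ∈ PlanF G x y p := by
        refine ⟨?_, ?_, ?_, ?_⟩
        · intro q
          by_cases hq : η q < 0
          · have := hεle q hq
            have he2 : ε * η q = -(ε * (-η q)) := by ring
            beta_reduce
            linarith
          · have := mul_nonneg hεpos.le (not_lt.mp hq)
            have := hπ0 q
            beta_reduce
            linarith
        · intro q hq
          beta_reduce
          rw [hπsupp q hq, hsupp q hq]
          ring
        · intro u hu
          beta_reduce
          rw [Finset.sum_add_distrib, hπrow u hu, ← Finset.mul_sum, hrow u hu]
          ring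
        · intro v hv
          beta_reduce
          rw [Finset.sum_add_distrib, hπcol v hv, ← Finset.mul_sum, hcol0 v hv]
          ring
      have hopt' := hopt _ hπ'mem
      have hexpand : pcost G x y (fun q => π₀ q + ε * η q)
          = pcost G x y π₀ + ε * ∑ q ∈ ball G x ×ˢ ball G y, (G.dist q.1 q.2 : ℝ) * η q := by
        unfold pcost
        rw [Finset.mul_sum, ← Finset.sum_add_distrib]
        exact Finset.sum_congr rfl fun q _ => by ring
      rw [hexpand] at hopt'
      nlinarith
    · push_neg at hTne
      exact Finset.sum_nonneg fun q _ => mul_nonneg (Nat.cast_nonneg _) (hTne q)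
  have : (0 : ℝ) ≤ (W : ℝ) := le_trans hS hcost
  exact_mod_cast this

lemma reach_lb (hmem : π₀ ∈ PlanF G x y p)
    (hopt : ∀ π ∈ PlanF G x y p, pcost G x y π₀ ≤ pcost G x y π)
    (hcol : ∀ v' ∈ ball G y, ∃ u ∈ ball G x, 0 < π₀ (u, v'))
    {v : V} {W : ℤ} (h : Reach (resC G x π₀) (ball G y) y v W) :
    -(resC G x π₀ v y) ≤ W := by
  have h2 : Reach (resC G x π₀) (ball G y) y y (W + resC G x π₀ v y) :=
    Reach.step h (Finset.mem_insert_self _ _)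
  have := reach_nonneg hmem hopt hcol h2
  linarith

lemma exists_tight_potential (hG : G.Connected) (hmem : π₀ ∈ PlanF G x y p)
    (hopt : ∀ π ∈ PlanF G x y p, pcost G x y π₀ ≤ pcost G x y π)
    (hcol : ∀ v' ∈ ball G y, ∃ u ∈ ball G x, 0 < π₀ (u, v')) :
    ∃ φ : V → ℝ, IsLip G φ ∧ (∀ w, ∃ n : ℤ, φ w = (n : ℝ)) ∧ φ y = 0 ∧
      (∀ u v, 0 < π₀ (u, v) → φ u - φ v = (G.dist u v : ℝ)) := by
  have hy : y ∈ ball G y := Finset.mem_insert_self _ _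
  have hψex : ∀ v, ∃ m : ℤ, v ∈ ball G y →
      (Reach (resC G x π₀) (ball G y) y v m ∧
        ∀ W, Reach (resC G x π₀) (ball G y) y v W → m ≤ W) := by
    intro v
    by_cases hv : v ∈ ball G y
    · obtain ⟨m, hm1, hm2⟩ := Int.exists_least_of_bdd
        (P := fun W => Reach (resC G x π₀) (ball G y) y v W)
        ⟨-(resC G x π₀ v y), fun W hW => reach_lb hmem hopt hcol hW⟩
        ⟨0 + resC G x π₀ y v, Reach.step Reach.base hv⟩
      exact ⟨m, fun _ => ⟨hm1, hm2⟩⟩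
    · exact ⟨0, fun hv' => absurd hv' hv⟩
  choose ψ hψ using hψex
  have hψreach : ∀ v ∈ ball G y, Reach (resC G x π₀) (ball G y) y v (ψ v) :=
    fun v hv => (hψ v hv).1
  have hψmin : ∀ v ∈ ball G y, ∀ W, Reach (resC G x π₀) (ball G y) y v W → ψ v ≤ W :=
    fun v hv => (hψ v hv).2
  have hψstep : ∀ v ∈ ball G y, ∀ v' ∈ ball G y, ψ v' ≤ ψ v + resC G x π₀ v v' :=
    fun v hv v' hv' => hψmin v' hv' _ (Reach.step (hψreach v hv) hv')
  have hBne : (ball G y).Nonempty := ⟨y, hy⟩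
  set φraw : V → ℝ :=
    fun w => ((ball G y).image (fun v => (ψ v : ℝ) + (G.dist w v : ℝ))).min'
      (hBne.image _) with hφdef
  have hφle : ∀ w, ∀ v ∈ ball G y, φraw w ≤ (ψ v : ℝ) + G.dist w v :=
    fun w v hv => Finset.min'_le _ _ (Finset.mem_image_of_mem _ hv)
  have hφatt : ∀ w, ∃ v ∈ ball G y, φraw w = (ψ v : ℝ) + G.dist w v := by
    intro w
    have hmm := Finset.min'_mem _ (hBne.image (fun v => (ψ v : ℝ) + (G.dist w v : ℝ)))
    rw [Finset.mem_image] at hmm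
    obtain ⟨v, hv, he⟩ := hmm
    exact ⟨v, hv, he.symm⟩
  have hφeq : ∀ v ∈ ball G y, φraw v = (ψ v : ℝ) := by
    intro v hv
    refine le_antisymm ?_ ?_
    · have h1 := hφle v v hv
      rw [dist_self' v] at h1
      simpa using h1
    · obtain ⟨v'', hv'', he⟩ := hφatt v
      obtain ⟨u, hu, hpos⟩ := hcol v hv
      have h1 : ψ v ≤ ψ v'' + resC G x π₀ v'' v := hψstep v'' hv'' v hv
      have h2 : resC G x π₀ v'' v ≤ (G.dist u v'' : ℤ) - (G.dist u v : ℤ) := resC_le hu hpos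
      have h3 : (G.dist u v'' : ℤ) ≤ (G.dist u v : ℤ) + (G.dist v v'' : ℤ) := by
        exact_mod_cast hG.dist_triangle
      rw [he]
      have h4 : ψ v ≤ ψ v'' + (G.dist v v'' : ℤ) := by linarith
      exact_mod_cast h4
  refine ⟨fun w => φraw w - φraw y, ?_, ?_, by simp, ?_⟩
  · intro a b
    show |φraw a - φraw y - (φraw b - φraw y)| ≤ _
    rw [show φraw a - φraw y - (φraw b - φraw y) = φraw a - φraw b by ring, abs_sub_le_iff]
    constructor
    · obtain ⟨v, hv, he⟩ := hφatt b
      have h1 := hφle a v hv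
      have h3 : (G.dist a v : ℝ) ≤ (G.dist a b : ℝ) + (G.dist b v : ℝ) := by
        exact_mod_cast hG.dist_triangle
      rw [he]
      linarith
    · obtain ⟨v, hv, he⟩ := hφatt a
      have h1 := hφle b v hv
      have h3 : (G.dist b v : ℝ) ≤ (G.dist b a : ℝ) + (G.dist a v : ℝ) := by
        exact_mod_cast hG.dist_triangle
      rw [he, dist_cast_comm b a] at *
      linarith
  · intro w
    obtain ⟨v, hv, he⟩ := hφatt w
    obtain ⟨v', hv', he'⟩ := hφatt y
    exact ⟨(ψ v + (G.dist w v : ℤ)) - (ψ v' + (G.dist y v' : ℤ)), by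
      beta_reduce; rw [he, he']; push_cast; ring⟩
  · intro u v hpos
    have hq : (u, v) ∈ ball G x ×ˢ ball G y := by
      by_contra hq'
      rw [hmem.2.1 _ hq'] at hpos
      exact lt_irrefl 0 hpos
    have hu : u ∈ ball G x := (Finset.mem_product.mp hq).1
    have hv : v ∈ ball G y := (Finset.mem_product.mp hq).2
    show φraw u - φraw y - (φraw v - φraw y) = _
    rw [show φraw u - φraw y - (φraw v - φraw y) = φraw u - φraw v by ring]
    refine le_antisymm ?_ ?_
    · have h1 := hφle u v hv
      have h2 := hφeq v hv
      linarith
    · obtain ⟨v'', hv'', he⟩ := hφatt u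
      have h1 : ψ v ≤ ψ v'' + resC G x π₀ v'' v := hψstep v'' hv'' v hv
      have h2 : resC G x π₀ v'' v ≤ (G.dist u v'' : ℤ) - (G.dist u v : ℤ) := resC_le hu hpos
      have h3 : (ψ v : ℝ) + (G.dist u v : ℝ) ≤ (ψ v'' : ℝ) + (G.dist u v'' : ℝ) := by
        exact_mod_cast (by linarith : ψ v + (G.dist u v : ℤ) ≤ ψ v'' + (G.dist u v'' : ℤ))
      have h4 := hφeq v hv
      rw [he]
      linarith

end NoNegCycle

section Assembly

variable {G : SimpleGraph V} [G.LocallyFinite] {x y : V} {p : ℝ}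

lemma mu_pos (hd : 0 < G.degree x) (hp : 0 < p) (hp1 : p < 1) {z : V}
    (hz : z ∈ ball G x) : 0 < mu G x p z := by
  rcases Finset.mem_insert.mp hz with rfl | hz'
  · rw [mu_self]; exact hp
  · rw [mu_adj G x p (by simpa using hz')]
    apply div_pos (by linarith)
    exact_mod_cast hd

lemma W1_eq_pcost (hdx : 0 < G.degree x) (hp : 0 ≤ p) (hp1 : p ≤ 1) {π₀ : V × V → ℝ}
    (hmem : π₀ ∈ PlanF G x y p)
    (hopt : ∀ π ∈ PlanF G x y p, pcost G x y π₀ ≤ pcost G x y π) :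
    W1 G (mu G x p) (mu G y p) = pcost G x y π₀ := by
  have hplan := isPlan_of_planF hdx hp hp1 hmem
  refine le_antisymm ?_ ?_
  · have := W1_le hplan
    rwa [cost_eq_pcost hplan] at this
  · refine le_csInf ⟨_, ⟨_, hplan, rfl⟩⟩ ?_
    rintro b ⟨π, hπ, rfl⟩
    rw [cost_eq_pcost hπ]
    exact hopt π (planF_of_isPlan hπ)

lemma W1_le_fIdle (hG : G.Connected) (hxy : G.Adj x y) (hdx : 0 < G.degree x)
    (hdy : 0 < G.degree y) (hp : 0 < p) (hp1 : p < 1) :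
    ∃ j : ℤ, (j = -1 ∨ j = 0 ∨ j = 1) ∧
      W1 G (mu G x p) (mu G y p) ≤ fIdle G x y j p := by
  obtain ⟨π₀, hmem, hopt⟩ := exists_min_plan hdx hdy hp.le hp1.le
  obtain ⟨hπ0, hπsupp, hπrow, hπcol⟩ := hmem
  have hcolpos : ∀ v' ∈ ball G y, ∃ u ∈ ball G x, 0 < π₀ (u, v') := by
    intro v' hv'
    by_contra hno
    push_neg at hno
    have hz : ∑ u ∈ ball G x, π₀ (u, v') = 0 :=
      Finset.sum_eq_zero fun u hu => le_antisymm (hno u hu) (hπ0 (u, v'))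
    rw [hπcol v' hv'] at hz
    exact absurd hz (mu_pos hdy hp hp1 hv').ne'
  obtain ⟨φ, hLip, hInt, hy0, htight⟩ :=
    exists_tight_potential hG ⟨hπ0, hπsupp, hπrow, hπcol⟩ hopt hcolpos
  obtain ⟨j, hjx⟩ := hInt x
  have hplan := isPlan_of_planF hdx hp.le hp1.le ⟨hπ0, hπsupp, hπrow, hπcol⟩
  have hj : j = -1 ∨ j = 0 ∨ j = 1 := by
    have h1 := hLip x y
    rw [hy0, sub_zero, hjx, dist_adj hxy] at h1
    have h2 : |(j : ℝ)| ≤ 1 := by simpa using h1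
    have h3 : |j| ≤ 1 := by exact_mod_cast h2
    rw [abs_le] at h3
    omega
  have hInC : InC G x y j φ := ⟨hLip, hInt, hjx, hy0⟩
  refine ⟨j, hj, ?_⟩
  have hmid : pcost G x y π₀
      = ∑ u ∈ ball G x, φ u * mu G x p u - ∑ v ∈ ball G y, φ v * mu G y p v := by
    have hrow : ∑ u ∈ ball G x, φ u * mu G x p u
        = ∑ q ∈ ball G x ×ˢ ball G y, φ q.1 * π₀ q := by
      rw [Finset.sum_product]
      exact Finset.sum_congr rfl fun u _ => by rw [← plan_marg_row hplan u, Finset.mul_sum]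
    have hcol : ∑ v ∈ ball G y, φ v * mu G y p v
        = ∑ q ∈ ball G x ×ˢ ball G y, φ q.2 * π₀ q := by
      rw [Finset.sum_product_right]
      exact Finset.sum_congr rfl fun v _ => by rw [← plan_marg_col hplan v, Finset.mul_sum]
    rw [hrow, hcol, ← Finset.sum_sub_distrib]
    unfold pcost
    refine Finset.sum_congr rfl fun q _ => ?_
    rcases eq_or_lt_of_le (hπ0 q) with he | hlt
    · rw [← he]; ring
    · have ht := htight q.1 q.2 (by rwa [Prod.mk.eta])
      rw [show φ q.1 * π₀ q - φ q.2 * π₀ q = (φ q.1 - φ q.2) * π₀ q by ring, ht]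
  have hchain : W1 G (mu G x p) (mu G y p)
      = (p - (1 - p) / (G.degree y : ℝ)) * (j : ℝ)
        + ((1 - p) / ((G.degree x : ℝ) * G.degree y)) * Fpot G x y φ := by
    rw [W1_eq_pcost hdx hp.le hp1.le ⟨hπ0, hπsupp, hπrow, hπcol⟩ hopt, hmid,
      dual_eq hxy hdx hdy hy0 p, hjx]
  rw [hchain]
  unfold fIdle
  have hB : 0 ≤ (1 - p) / ((G.degree x : ℝ) * G.degree y) := by
    apply div_nonneg (by linarith)
    positivity
  have := le_cIdle hG hxy hInC
  nlinarith

lemma fIdle_le_W1 (hG : G.Connected) (hxy : G.Adj x y) (hdx : 0 < G.degree x)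
    (hdy : 0 < G.degree y) (hp : 0 ≤ p) (hp1 : p ≤ 1) :
    fIdle G x y 1 p ≤ W1 G (mu G x p) (mu G y p) := by
  have hdx' : (G.degree x : ℝ) ≠ 0 := Nat.cast_ne_zero.mpr hdx.ne'
  have hdy' : (G.degree y : ℝ) ≠ 0 := Nat.cast_ne_zero.mpr hdy.ne'
  have hWφ : ∀ φ, InC G x y 1 φ →
      (p - (1 - p) / (G.degree y : ℝ))
        + ((1 - p) / ((G.degree x : ℝ) * G.degree y)) * Fpot G x y φ
        ≤ W1 G (mu G x p) (mu G y p) := by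
    intro φ hφ
    have hprod := isPlan_of_planF hdx hp hp1 (prod_mem_planF hdx hdy hp hp1)
    refine le_csInf ⟨_, ⟨_, hprod, rfl⟩⟩ ?_
    rintro b ⟨π, hπ, rfl⟩
    have h1 := dual_le_cost hφ.1 hπ
    rw [dual_eq hxy hdx hdy hφ.2.2.2 p, hφ.2.2.1] at h1
    simpa using h1
  by_cases hp1' : p = 1
  · subst hp1'
    have h1 := hWφ _ (mem_C_base hG hxy (by norm_num) (by norm_num))
    unfold fIdle
    norm_num at h1 ⊢
    exact h1
  · have hplt : p < 1 := lt_of_le_of_ne hp1 hp1'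
    have hB : 0 < (1 - p) / ((G.degree x : ℝ) * G.degree y) := by
      apply div_pos (by linarith)
      have h1 : (0:ℝ) < G.degree x := by exact_mod_cast hdx
      have h2 : (0:ℝ) < G.degree y := by exact_mod_cast hdy
      positivity
    have hc : cIdle G x y 1
        ≤ (W1 G (mu G x p) (mu G y p) - (p - (1 - p) / (G.degree y : ℝ)))
          / ((1 - p) / ((G.degree x : ℝ) * G.degree y)) := by
      refine cIdle_le hG hxy (exists_mem_C hG hxy (by norm_num) (by norm_num)) fun φ hφ => ?_
      rw [le_div_iff₀ hB]
      have := hWφ φ hφ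
      nlinarith
    unfold fIdle
    rw [← le_sub_iff_add_le']
    calc ((1 - p) / ((G.degree x : ℝ) * G.degree y)) * cIdle G x y 1
        ≤ ((1 - p) / ((G.degree x : ℝ) * G.degree y))
          * ((W1 G (mu G x p) (mu G y p) - (p - (1 - p) / (G.degree y : ℝ)))
            / ((1 - p) / ((G.degree x : ℝ) * G.degree y))) :=
          mul_le_mul_of_nonneg_left hc hB.le
      _ = W1 G (mu G x p) (mu G y p) - (p - (1 - p) / (G.degree y : ℝ)) * (1 : ℤ) := by
          rw [mul_div_cancel₀ _ hB.ne']
          push_cast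
          ring
      _ = _ := by push_cast; ring

lemma W1_mix (hG : G.Connected) (hxy : G.Adj x y) (hdx : 0 < G.degree x)
    (hdy : 0 < G.degree y) {p0 : ℝ} (hp00 : 0 ≤ p0) (hp01 : p0 < 1)
    (hp : p0 ≤ p) (hp1 : p ≤ 1) :
    W1 G (mu G x p) (mu G y p)
      ≤ (p - p0) / (1 - p0) + (1 - (p - p0) / (1 - p0)) * W1 G (mu G x p0) (mu G y p0) := by
  obtain ⟨π₀, hmem, hopt⟩ := exists_min_plan hdx hdy hp00 hp01.le
  obtain ⟨hπ0, hπsupp, hπrow, hπcol⟩ := hmem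
  set s : ℝ := (p - p0) / (1 - p0) with hs
  have hdenom : (0:ℝ) < 1 - p0 := by linarith
  have hs0 : 0 ≤ s := div_nonneg (by linarith) hdenom.le
  have hs1 : s ≤ 1 := by
    rw [hs, div_le_one hdenom]
    linarith
  have hxA : x ∈ ball G x := Finset.mem_insert_self _ _
  have hyB : y ∈ ball G y := Finset.mem_insert_self _ _
  have hkey1 : s + (1 - s) * p0 = p := by
    rw [hs]; field_simp; ring
  have hkey2 : (1 - s) * (1 - p0) = 1 - p := by
    rw [hs]; field_simp; ring
  set πm : V × V → ℝ :=
    fun q => s * (if q = (x, y) then (1 : ℝ) else 0) + (1 - s) * π₀ q with hπm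
  have hπmF : πm ∈ PlanF G x y p := by
    refine ⟨?_, ?_, ?_, ?_⟩
    · intro q
      have := hπ0 q
      simp only [hπm]
      split_ifs <;> nlinarith
    · intro q hq
      have h1 : q ≠ (x, y) := by
        rintro rfl
        exact hq (Finset.mem_product.mpr ⟨hxA, hyB⟩)
      simp only [hπm]
      rw [hπsupp q hq, if_neg h1]
      ring
    · intro u hu
      simp only [hπm]
      rw [Finset.sum_add_distrib, ← Finset.mul_sum, ← Finset.mul_sum, hπrow u hu,
        sum_ind_row (ball G y) hyB u x]
      rcases Finset.mem_insert.mp hu with rfl | hu'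
      · rw [if_pos rfl, mu_self, mu_self, mul_one]
        linarith [hkey1]
      · have hne : u ≠ x := by
          rintro rfl
          simp at hu'
        rw [if_neg hne, mu_adj G x p0 (by simpa using hu'), mu_adj G x p (by simpa using hu')]
        rw [mul_zero, zero_add, ← mul_div_assoc, hkey2]
    · intro v hv
      simp only [hπm]
      rw [Finset.sum_add_distrib, ← Finset.mul_sum, ← Finset.mul_sum, hπcol v hv,
        sum_ind_col (ball G x) hxA v y]
      rcases Finset.mem_insert.mp hv with rfl | hv'
      · rw [if_pos rfl, mu_self, mu_self, mul_one]
        linarith [hkey1]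
      · have hne : v ≠ y := by
          rintro rfl
          simp at hv'
        rw [if_neg hne, mu_adj G y p0 (by simpa using hv'), mu_adj G y p (by simpa using hv')]
        rw [mul_zero, zero_add, ← mul_div_assoc, hkey2]
  have hplanm := isPlan_of_planF hdx (by linarith) hp1 hπmF
  have hcostm : pcost G x y πm
      = s + (1 - s) * pcost G x y π₀ := by
    unfold pcost
    have hterm : ∀ q ∈ ball G x ×ˢ ball G y,
        (G.dist q.1 q.2 : ℝ) * πm q
        = s * ((G.dist q.1 q.2 : ℝ) * (if q = (x, y) then (1 : ℝ) else 0))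
          + (1 - s) * ((G.dist q.1 q.2 : ℝ) * π₀ q) := by
      intro q _
      simp only [hπm]
      ring
    rw [Finset.sum_congr rfl hterm, Finset.sum_add_distrib, ← Finset.mul_sum, ← Finset.mul_sum,
      sum_dist_ind (ball G x) (ball G y) hxA hyB, dist_adj hxy]
    norm_num
  have h1 := W1_le hplanm
  rw [cost_eq_pcost hplanm, hcostm] at h1
  rw [W1_eq_pcost hdx hp00 hp01.le ⟨hπ0, hπsupp, hπrow, hπcol⟩ hopt]
  exact h1

end Assembly

end Stmt15

open Stmt15

theorem stmt15 {V : Type*} (G : SimpleGraph V) [G.LocallyFinite] (hG : G.Connected)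
    (x y : V) (hxy : G.Adj x y) :
    ∃ K : ℝ,
      Filter.Tendsto (fun p => kappa G p x y / (1 - p)) (nhdsWithin 1 (Set.Iio 1)) (nhds K) ∧
      ∀ p ∈ Set.Icc (1 / ((max (G.degree x) (G.degree y) : ℝ) + 1)) (1 : ℝ),
        kappa G p x y = (1 - p) * K := by
  have hdx : 0 < G.degree x := by
    have h1 : 0 < (G.neighborFinset x).card := Finset.card_pos.mpr ⟨y, by simpa using hxy⟩
    simpa [SimpleGraph.card_neighborFinset_eq_degree] using h1
  have hdy : 0 < G.degree y := by
    have h1 : 0 < (G.neighborFinset y).card := Finset.card_pos.mpr ⟨x, by simpa using hxy.symm⟩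
    simpa [SimpleGraph.card_neighborFinset_eq_degree] using h1
  have hdx' : (G.degree x : ℝ) ≠ 0 := Nat.cast_ne_zero.mpr hdx.ne'
  have hdy' : (G.degree y : ℝ) ≠ 0 := Nat.cast_ne_zero.mpr hdy.ne'
  have hDr1 : (1 : ℝ) ≤ (max (G.degree x) (G.degree y) : ℝ) := by
    exact_mod_cast Nat.one_le_iff_ne_zero.mpr
      (by positivity : 0 < max (G.degree x) (G.degree y)).ne'
  set p0 : ℝ := 1 / ((max (G.degree x) (G.degree y) : ℝ) + 1) with hp0def
  have hp0pos : 0 < p0 := by rw [hp0def]; positivity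
  have hp0lt : p0 < 1 := by
    rw [hp0def, div_lt_one (by linarith)]
    linarith
  have hsd : W1 G (mu G x p0) (mu G y p0) = fIdle G x y 1 p0 := by
    refine le_antisymm ?_ (fIdle_le_W1 hG hxy hdx hdy hp0pos.le hp0lt.le)
    obtain ⟨j, hj, hle⟩ := W1_le_fIdle hG hxy hdx hdy hp0pos hp0lt
    refine le_trans hle ?_
    rw [hp0def]
    exact fIdle_chain hG hxy hdx hdy hj
  set cc : ℝ := cIdle G x y 1 with hcc
  set K : ℝ := 1 + 1 / (G.degree y : ℝ) - cc / ((G.degree x : ℝ) * G.degree y) with hK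
  have hfid : ∀ p : ℝ, fIdle G x y 1 p
      = (p - (1 - p) / (G.degree y : ℝ))
        + ((1 - p) / ((G.degree x : ℝ) * G.degree y)) * cc := by
    intro p
    unfold fIdle
    rw [← hcc]
    push_cast
    ring
  have hkap : ∀ p, p0 ≤ p → p ≤ 1 → kappa G p x y = (1 - p) * K := by
    intro p hp hp1
    have hp0nn : (0 : ℝ) ≤ p := le_trans hp0pos.le hp
    have hlow := fIdle_le_W1 hG hxy hdx hdy hp0nn hp1
    have hup := W1_mix hG hxy hdx hdy hp0pos.le hp0lt hp hp1
    rw [hsd] at hup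
    have hlin : (p - p0) / (1 - p0) + (1 - (p - p0) / (1 - p0)) * fIdle G x y 1 p0
        = fIdle G x y 1 p := by
      rw [hfid p0, hfid p, hp0def]
      have h1 : (max (G.degree x) (G.degree y) : ℝ) + 1 ≠ 0 := by linarith
      have h2 : 1 - 1 / ((max (G.degree x) (G.degree y) : ℝ) + 1) ≠ 0 := by
        rw [sub_ne_zero]
        intro hcontra
        have := (div_eq_one_iff_eq h1).mp hcontra.symm
        linarith
      have h3 : (max (G.degree x) (G.degree y) : ℝ) ≠ 0 := by linarith
      field_simp
      ring_nf
      field_simp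
      ring
    rw [hlin] at hup
    have hWeq : W1 G (mu G x p) (mu G y p) = fIdle G x y 1 p := le_antisymm hup hlow
    unfold kappa
    rw [hWeq, hfid p, hK]
    field_simp
    ring
  refine ⟨K, ?_, fun p hp => hkap p hp.1 hp.2⟩
  have hev : (fun p => kappa G p x y / (1 - p)) =ᶠ[nhdsWithin 1 (Set.Iio 1)]
      (fun _ => K) := by
    filter_upwards [mem_nhdsWithin_of_mem_nhds (Ioi_mem_nhds hp0lt), self_mem_nhdsWithin]
      with p hp hpi
    rw [hkap p (le_of_lt hp) (le_of_lt hpi)]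
    exact mul_div_cancel_left₀ K (sub_ne_zero.mpr (ne_of_gt hpi))
  exact Filter.Tendsto.congr' hev.symm tendsto_const_nhds
end

section
/- Let x∼y be an edge of G with d_x ≥ d_y. Then κ_0(x,y) ≤ κ(x,y) ≤ κ_0(x,y) + 2/d_x. -/
open scoped Classical

section Part1
open Function Finset

variable {V : Type*} (G : SimpleGraph V) [G.LocallyFinite]

lemma mu_mem_support {x : V} {p : ℝ} {z : V} (h : mu G x p z ≠ 0) :
    z ∈ insert x (G.neighborFinset x) := by
  by_contra hz
  simp only [Finset.mem_insert, SimpleGraph.mem_neighborFinset] at hz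
  push_neg at hz
  simp [mu, hz.1, hz.2] at h

lemma mu_apply_self (x : V) (p : ℝ) : mu G x p x = p := by simp [mu]

lemma mu_apply_adj {x z : V} (p : ℝ) (h : G.Adj x z) :
    mu G x p z = (1 - p) / (G.degree x) := by
  have hzx : z ≠ x := fun e => (G.loopless.irrefl x (e ▸ h)).elim
  simp [mu, hzx, h]

lemma mu_apply_not {x z : V} (p : ℝ) (h1 : z ≠ x) (h2 : ¬ G.Adj x z) : mu G x p z = 0 := by
  simp [mu, h1, h2]

lemma mu_nonneg {x : V} {p : ℝ} (h0 : 0 ≤ p) (h1 : p ≤ 1) (z : V) : 0 ≤ mu G x p z := by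
  unfold mu; split_ifs with h h'
  · exact h0
  · exact div_nonneg (by linarith) (Nat.cast_nonneg _)
  · exact le_refl 0

lemma mu_sum {x : V} (hx : 0 < G.degree x) (p : ℝ) :
    ∑ z ∈ insert x (G.neighborFinset x), mu G x p z = 1 := by
  rw [Finset.sum_insert (G.notMem_neighborFinset_self x), mu_apply_self]
  have h : ∀ z ∈ G.neighborFinset x, mu G x p z = (1 - p) / (G.degree x) := fun z hz =>
    mu_apply_adj G p (by rwa [SimpleGraph.mem_neighborFinset] at hz)
  rw [Finset.sum_congr rfl h, Finset.sum_const, SimpleGraph.card_neighborFinset_eq_degree]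
  have hdx : (G.degree x : ℝ) ≠ 0 := by positivity
  rw [nsmul_eq_mul, mul_div_cancel₀ _ hdx]; ring

lemma mu_support_subset (x : V) (p : ℝ) :
    Function.support (mu G x p) ⊆ ↑(insert x (G.neighborFinset x)) := fun z hz => by
  exact_mod_cast mu_mem_support G hz

lemma mu_finsum {x : V} (hx : 0 < G.degree x) (p : ℝ) : ∑ᶠ z, mu G x p z = 1 := by
  rw [finsum_eq_sum_of_support_subset _ (mu_support_subset G x p)]
  exact mu_sum G hx p

lemma isFinProb_mu {x : V} (hx : 0 < G.degree x) {p : ℝ} (h0 : 0 ≤ p) (h1 : p ≤ 1) :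
    IsFinProb (mu G x p) :=
  ⟨mu_nonneg G h0 h1, (Set.Finite.subset (insert x (G.neighborFinset x)).finite_toSet
      (mu_support_subset G x p)), mu_finsum G hx p⟩

end Part1

section Plans
open Function Finset

variable {V : Type*} {μ1 μ2 : V → ℝ} {π : V × V → ℝ}

lemma IsPlan.nonneg (h : IsPlan π μ1 μ2) (q : V × V) : 0 ≤ π q := (h.1 q).1

lemma IsPlan.row_finite (h : IsPlan π μ1 μ2) (u : V) :
    (support fun v => π (u, v)).Finite := by
  have hsub : (support fun v => π (u, v)) ⊆ (fun v => (u, v)) ⁻¹' (support π) := fun v hv => hv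
  exact (Set.Finite.preimage (Function.Injective.injOn fun a b hab =>
    congrArg Prod.snd hab) h.2.1).subset hsub

lemma IsPlan.col_finite (h : IsPlan π μ1 μ2) (v : V) :
    (support fun u => π (u, v)).Finite := by
  have hsub : (support fun u => π (u, v)) ⊆ (fun u => (u, v)) ⁻¹' (support π) := fun u hu => hu
  exact (Set.Finite.preimage (Function.Injective.injOn fun a b hab =>
    congrArg Prod.fst hab) h.2.1).subset hsub

lemma IsPlan.entry_le_row (h : IsPlan π μ1 μ2) (u v : V) : π (u, v) ≤ μ1 u := by
  rw [← h.2.2.1 u]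
  exact single_le_finsum v (h.row_finite u) (fun j => h.nonneg _)

lemma IsPlan.entry_le_col (h : IsPlan π μ1 μ2) (u v : V) : π (u, v) ≤ μ2 v := by
  rw [← h.2.2.2 v]
  exact single_le_finsum u (h.col_finite v) (fun j => h.nonneg _)

lemma IsPlan.row_zero (h : IsPlan π μ1 μ2) {u : V} (hu : μ1 u = 0) (v : V) : π (u, v) = 0 :=
  le_antisymm (hu ▸ h.entry_le_row u v) (h.nonneg _)

lemma IsPlan.col_zero (h : IsPlan π μ1 μ2) {v : V} (hv : μ2 v = 0) (u : V) : π (u, v) = 0 :=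
  le_antisymm (hv ▸ h.entry_le_col u v) (h.nonneg _)

lemma IsPlan.rowsum (h : IsPlan π μ1 μ2) {B : Finset V} (hB : support μ2 ⊆ ↑B) (u : V) :
    ∑ v ∈ B, π (u, v) = μ1 u := by
  rw [← h.2.2.1 u]
  refine (finsum_eq_sum_of_support_subset _ ?_).symm
  intro v hv
  have h1 : 0 < π (u, v) := lt_of_le_of_ne (h.nonneg _) (Ne.symm hv)
  exact hB (lt_of_lt_of_le h1 (h.entry_le_col u v)).ne'

lemma IsPlan.colsum (h : IsPlan π μ1 μ2) {A : Finset V} (hA : support μ1 ⊆ ↑A) (v : V) :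
    ∑ u ∈ A, π (u, v) = μ2 v := by
  rw [← h.2.2.2 v]
  refine (finsum_eq_sum_of_support_subset _ ?_).symm
  intro u hu
  have h1 : 0 < π (u, v) := lt_of_le_of_ne (h.nonneg _) (Ne.symm hu)
  exact hA (lt_of_lt_of_le h1 (h.entry_le_row u v)).ne'

lemma IsPlan.support_subset (h : IsPlan π μ1 μ2) {A B : Finset V}
    (hA : support μ1 ⊆ ↑A) (hB : support μ2 ⊆ ↑B) :
    support π ⊆ ↑(A ×ˢ B) := by
  rintro ⟨u, v⟩ hq
  have h1 : 0 < π (u, v) := lt_of_le_of_ne (h.nonneg _) (Ne.symm hq)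
  rw [Finset.coe_product]
  exact ⟨hA (lt_of_lt_of_le h1 (h.entry_le_row u v)).ne',
    hB (lt_of_lt_of_le h1 (h.entry_le_col u v)).ne'⟩

lemma cost_eq_sum {G : SimpleGraph V} (h : IsPlan π μ1 μ2) {A B : Finset V}
    (hA : support μ1 ⊆ ↑A) (hB : support μ2 ⊆ ↑B) :
    cost G π = ∑ q ∈ A ×ˢ B, (G.dist q.1 q.2 : ℝ) * π q := by
  apply finsum_eq_sum_of_support_subset
  intro q hq
  apply h.support_subset hA hB
  intro hq0
  simp [Function.mem_support, hq0] at hq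

lemma cost_nonneg {G : SimpleGraph V} (h : IsPlan π μ1 μ2) : 0 ≤ cost G π :=
  finsum_nonneg fun q => mul_nonneg (Nat.cast_nonneg _) (h.nonneg q)

lemma W1_le_cost {G : SimpleGraph V} (h : IsPlan π μ1 μ2) : W1 G μ1 μ2 ≤ cost G π :=
  csInf_le ⟨0, by rintro c ⟨π', hπ', rfl⟩; exact cost_nonneg hπ'⟩ ⟨π, h, rfl⟩

lemma le_W1 {G : SimpleGraph V} (hne : ∃ π', IsPlan π' μ1 μ2) {c : ℝ}
    (hc : ∀ π', IsPlan π' μ1 μ2 → c ≤ cost G π') : c ≤ W1 G μ1 μ2 := by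
  apply le_csInf
  · obtain ⟨π', h⟩ := hne; exact ⟨_, π', h, rfl⟩
  · rintro _ ⟨π', hπ', rfl⟩; exact hc π' hπ'

lemma isPlan_prod (h1 : IsFinProb μ1) (h2 : IsFinProb μ2) :
    IsPlan (fun q => μ1 q.1 * μ2 q.2) μ1 μ2 := by
  have hle1 : ∀ v, μ1 v ≤ 1 := fun v => by
    rw [← h1.2.2]; exact single_le_finsum v h1.2.1 h1.1
  have hle2 : ∀ v, μ2 v ≤ 1 := fun v => by
    rw [← h2.2.2]; exact single_le_finsum v h2.2.1 h2.1
  refine ⟨fun q => ⟨mul_nonneg (h1.1 _) (h2.1 _), ?_⟩, ?_, fun u => ?_, fun v => ?_⟩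
  · calc μ1 q.1 * μ2 q.2 ≤ 1 * 1 := by
          exact mul_le_mul (hle1 _) (hle2 _) (h2.1 _) zero_le_one
       _ = 1 := by ring
  · apply Set.Finite.subset (Set.Finite.prod h1.2.1 h2.2.1)
    rintro ⟨u, v⟩ hq
    have : μ1 u * μ2 v ≠ 0 := hq
    exact ⟨left_ne_zero_of_mul this, right_ne_zero_of_mul this⟩
  · simp only
    rw [← mul_finsum' _ _ h2.2.1, h2.2.2, mul_one]
  · simp only
    have : (fun u => μ1 u * μ2 v) = fun u => μ2 v * μ1 u := by ext u; ring
    rw [this, ← mul_finsum' _ _ h1.2.1, h1.2.2, mul_one]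

end Plans

section Scale
open Function Finset

variable {V : Type*} (G : SimpleGraph V) [G.LocallyFinite]

lemma mu_le_offdiag {x z : V} {p : ℝ} (hp : p ≤ 1) (hz : z ≠ x) :
    mu G x p z ≤ (1 - p) / (G.degree x) := by
  by_cases h : G.Adj x z
  · rw [mu_apply_adj G p h]
  · rw [mu_apply_not G p hz h]
    exact div_nonneg (by linarith) (Nat.cast_nonneg _)

lemma mu_le_one_sub {x z : V} {p : ℝ} (hp : p ≤ 1) (hdx : 0 < G.degree x) (hz : z ≠ x) :
    mu G x p z ≤ 1 - p := by
  refine (mu_le_offdiag G hp hz).trans ?_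
  have h1 : (1 : ℝ) ≤ (G.degree x : ℝ) := by exact_mod_cast hdx
  have h2 : (0:ℝ) ≤ 1 - p := by linarith
  calc (1 - p) / (G.degree x) ≤ (1 - p) / 1 := div_le_div_of_nonneg_left h2 one_pos h1
    _ = 1 - p := by ring

lemma mu_scale {x z : V} {p p' : ℝ} (hp' : p' ≠ 1) (hz : z ≠ x) :
    mu G x p z = ((1 - p) / (1 - p')) * mu G x p' z := by
  by_cases h : G.Adj x z
  · rw [mu_apply_adj G p h, mu_apply_adj G p' h]
    have : (1 : ℝ) - p' ≠ 0 := sub_ne_zero.mpr (Ne.symm hp')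
    field_simp
  · rw [mu_apply_not G p hz h, mu_apply_not G p' hz h, mul_zero]

lemma mu_sum_neighbors {x : V} (hdx : 0 < G.degree x) (p : ℝ) :
    ∑ z ∈ G.neighborFinset x, mu G x p z = 1 - p := by
  have h := mu_sum G hdx p
  rw [Finset.sum_insert (G.notMem_neighborFinset_self x), mu_apply_self] at h
  linarith

/-- The off-(x,y) row-x mass of a plan is at most `1 - p'`. -/
lemma offmass_le {x y : V} {p' : ℝ} {π' : V × V → ℝ}
    (h : IsPlan π' (mu G x p') (mu G y p'))
    (hxy : G.Adj x y) (hdx : 0 < G.degree x) (hdy : 0 < G.degree y) :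
    p' - π' (x, y) ≤ 1 - p' := by
  have hrow := h.rowsum (mu_support_subset G y p') x
  rw [Finset.sum_insert (G.notMem_neighborFinset_self y), mu_apply_self] at hrow
  have hle : ∑ v ∈ G.neighborFinset y, π' (x, v) ≤ ∑ v ∈ G.neighborFinset y, mu G y p' v :=
    Finset.sum_le_sum fun v _ => h.entry_le_col x v
  rw [mu_sum_neighbors G hdy p'] at hle
  linarith

lemma offmass_nonneg {x y : V} {p' : ℝ} {π' : V × V → ℝ}
    (h : IsPlan π' (mu G x p') (mu G y p'))
    (hxy : G.Adj x y) (hdx : 0 < G.degree x) (hdy : 0 < G.degree y) :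
    0 ≤ p' - π' (x, y) := by
  have hrow := h.rowsum (mu_support_subset G y p') x
  rw [Finset.sum_insert (G.notMem_neighborFinset_self y), mu_apply_self] at hrow
  have : 0 ≤ ∑ v ∈ G.neighborFinset y, π' (x, v) :=
    Finset.sum_nonneg fun v _ => h.nonneg _
  linarith

/-- Key scaling construction: from a plan at idleness `p'` build one at idleness `p ∈ [1/2,1)`. -/
lemma W1_le_scale {x y : V} (hxy : G.Adj x y)
    {p p' : ℝ} (hp : 1/2 ≤ p) (hp1 : p < 1) (hp0 : 0 ≤ p') (hp1' : p' < 1)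
    {π' : V × V → ℝ} (h : IsPlan π' (mu G x p') (mu G y p')) :
    W1 G (mu G x p) (mu G y p) ≤ p + ((1 - p)/(1 - p')) * (cost G π' - p') := by
  have hdx : 0 < G.degree x := (G.degree_pos_iff_exists_adj x).mpr ⟨y, hxy⟩
  have hdy : 0 < G.degree y := (G.degree_pos_iff_exists_adj y).mpr ⟨x, hxy.symm⟩
  set lam : ℝ := (1 - p)/(1 - p') with hlam
  have hb' : (0:ℝ) < 1 - p' := by linarith
  have hb'' : (1:ℝ) - p' ≠ 0 := ne_of_gt hb'
  have hb : (0:ℝ) ≤ 1 - p := by linarith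
  have hlam0 : 0 ≤ lam := div_nonneg hb hb'.le
  have hlam1 : lam * (1 - p') = 1 - p := by rw [hlam]; field_simp
  set δ0 : ℝ := p - lam * p' with hδ0
  set e : V × V → ℝ := fun q => if q = (x, y) then δ0 else 0 with he
  set π : V × V → ℝ := fun q => lam * π' q + e q with hπdef
  have heval : ∀ q, q ≠ (x, y) → e q = 0 := by
    intro q hq; rw [he]; exact if_neg hq
  have hesupp : support e ⊆ {(x, y)} := by
    intro q hq
    simp only [Set.mem_singleton_iff]
    by_contra hne
    exact hq (heval q hne)
  have hefin : (support e).Finite := (Set.finite_singleton _).subset hesupp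
  -- row and column finsums of e
  have herow : ∀ u, ∑ᶠ v, e (u, v) = if u = x then δ0 else 0 := by
    intro u
    rw [finsum_eq_single _ y (fun v hv => heval _ (by simp [Prod.ext_iff, hv]))]
    simp [he, Prod.ext_iff]
  have hecol : ∀ v, ∑ᶠ u, e (u, v) = if v = y then δ0 else 0 := by
    intro v
    rw [finsum_eq_single _ x (fun u hu => heval _ (by simp [Prod.ext_iff, hu]))]
    simp [he, Prod.ext_iff]
  have herowfin : ∀ u, (support fun v => e (u, v)).Finite := by
    intro u
    apply (Set.finite_singleton y).subset
    intro v hv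
    have hq : (u, v) = (x, y) := by
      by_contra hne; exact hv (heval _ hne)
    exact congrArg Prod.snd hq
  have hecolfin : ∀ v, (support fun u => e (u, v)).Finite := by
    intro v
    apply (Set.finite_singleton x).subset
    intro u hu
    have hq : (u, v) = (x, y) := by
      by_contra hne; exact hu (heval _ hne)
    exact congrArg Prod.fst hq
  -- the (x,y) entry of π
  have haval : π (x, y) = p - lam * (p' - π' (x, y)) := by
    have h2 : e (x, y) = δ0 := by rw [he]; simp
    have h1 : π (x, y) = lam * π' (x, y) + δ0 := by
      rw [hπdef]; simp only []; rw [h2]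
    rw [h1, hδ0]; ring
  have ha0 : 0 ≤ π (x, y) := by
    rw [haval]
    have h1 := offmass_le G h hxy hdx hdy
    have : lam * (p' - π' (x, y)) ≤ lam * (1 - p') :=
      mul_le_mul_of_nonneg_left h1 hlam0
    rw [hlam1] at this
    linarith
  have ha1 : π (x, y) ≤ 1 := by
    rw [haval]
    have h1 := offmass_nonneg G h hxy hdx hdy
    nlinarith
  -- entries of π off (x,y)
  have hoff : ∀ q, q ≠ (x, y) → π q = lam * π' q := by
    intro q hq; simp only [hπdef]; rw [heval q hq, add_zero]
  have hoffle : ∀ q, q ≠ (x, y) → π' q ≤ 1 - p' := by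
    rintro ⟨u, v⟩ hq
    by_cases hu : u = x
    · have hv : v ≠ y := fun hv => hq (by rw [hu, hv])
      exact (h.entry_le_col u v).trans (mu_le_one_sub G hp1'.le hdy hv)
    · exact (h.entry_le_row u v).trans (mu_le_one_sub G hp1'.le hdx hu)
  have hπplan : IsPlan π (mu G x p) (mu G y p) := by
    refine ⟨?_, ?_, ?_, ?_⟩
    · rintro q
      by_cases hq : q = (x, y)
      · rw [hq]; exact ⟨ha0, ha1⟩
      · rw [hoff q hq]
        constructor
        · exact mul_nonneg hlam0 (h.nonneg q)
        · have := mul_le_mul_of_nonneg_left (hoffle q hq) hlam0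
          rw [hlam1] at this
          linarith
    · apply Set.Finite.subset (Set.Finite.union h.2.1 hefin)
      intro q hq
      by_cases h1 : π' q = 0
      · right
        have : e q ≠ 0 := by
          intro h2; apply hq; simp [hπdef, h1, h2]
        exact this
      · left; exact h1
    · intro u
      have : (fun v => π (u, v)) = fun v => lam * π' (u, v) + e (u, v) := rfl
      rw [this, finsum_add_distrib ((h.row_finite u).subset ?_) (herowfin u)]
      · rw [← mul_finsum' _ _ (h.row_finite u), h.2.2.1 u, herow u]
        by_cases hu : u = x
        · subst hu; rw [mu_apply_self, mu_apply_self, if_pos rfl, hδ0]; ring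
        · rw [if_neg hu, add_zero, ← mu_scale G (by linarith) hu]
      · intro v hv
        simp only [Function.mem_support] at hv ⊢
        intro h0; exact hv (by simp [h0])
    · intro v
      have : (fun u => π (u, v)) = fun u => lam * π' (u, v) + e (u, v) := rfl
      rw [this, finsum_add_distrib ((h.col_finite v).subset ?_) (hecolfin v)]
      · rw [← mul_finsum' _ _ (h.col_finite v), h.2.2.2 v, hecol v]
        by_cases hv : v = y
        · subst hv; rw [mu_apply_self, mu_apply_self, if_pos rfl, hδ0]; ring
        · rw [if_neg hv, add_zero, ← mu_scale G (by linarith) hv]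
      · intro u hu
        simp only [Function.mem_support] at hu ⊢
        intro h0; exact hu (by simp [h0])
  -- cost of π
  have hdxy : (G.dist x y : ℝ) = 1 := by
    rw [SimpleGraph.dist_eq_one_iff_adj.mpr hxy]; norm_num
  have hcost : cost G π = lam * cost G π' + δ0 := by
    unfold cost
    have : (fun q : V × V => (G.dist q.1 q.2 : ℝ) * π q)
        = fun q => lam * ((G.dist q.1 q.2 : ℝ) * π' q) + (G.dist q.1 q.2 : ℝ) * e q := by
      ext q; simp only [hπdef]; ring
    rw [this, finsum_add_distrib, ← mul_finsum']
    · congr 1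
      rw [finsum_eq_single _ (x, y) (fun q hq => by rw [heval q hq, mul_zero])]
      have h2 : e (x, y) = δ0 := by rw [he]; simp
      rw [h2, hdxy, one_mul]
    · apply Set.Finite.subset h.2.1
      intro q hq
      simp only [Function.mem_support] at hq ⊢
      intro h0; exact hq (by rw [h0, mul_zero])
    · apply Set.Finite.subset h.2.1
      intro q hq
      simp only [Function.mem_support] at hq ⊢
      intro h0; exact hq (by rw [h0, mul_zero, mul_zero])
    · apply Set.Finite.subset hefin
      intro q hq
      simp only [Function.mem_support] at hq ⊢
      intro h0; exact hq (by rw [h0, mul_zero])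
  have := W1_le_cost (G := G) hπplan
  rw [hcost] at this
  calc W1 G (mu G x p) (mu G y p) ≤ lam * cost G π' + δ0 := this
    _ = p + lam * (cost G π' - p') := by rw [hδ0]; ring

end Scale

section Linear
open Function Finset

variable {V : Type*} (G : SimpleGraph V) [G.LocallyFinite]

lemma plans_nonempty {x y : V} (hxy : G.Adj x y) {p : ℝ} (h0 : 0 ≤ p) (h1 : p ≤ 1) :
    ∃ π', IsPlan π' (mu G x p) (mu G y p) := by
  have hdx : 0 < G.degree x := (G.degree_pos_iff_exists_adj x).mpr ⟨y, hxy⟩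
  have hdy : 0 < G.degree y := (G.degree_pos_iff_exists_adj y).mpr ⟨x, hxy.symm⟩
  exact ⟨_, isPlan_prod (isFinProb_mu G hdx h0 h1) (isFinProb_mu G hdy h0 h1)⟩

lemma W1_scale_ineq {x y : V} (hxy : G.Adj x y) {p p' : ℝ}
    (hp : 1/2 ≤ p) (hp1 : p < 1) (hp0 : 0 ≤ p') (hp1' : p' < 1) :
    W1 G (mu G x p) (mu G y p)
      ≤ p + ((1 - p)/(1 - p')) * (W1 G (mu G x p') (mu G y p') - p') := by
  have hb : (0:ℝ) < 1 - p := by linarith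
  have hb' : (0:ℝ) < 1 - p' := by linarith
  have hcomp : ((1 - p')/(1 - p)) * ((1 - p)/(1 - p')) = 1 := by field_simp
  have key : ∀ π', IsPlan π' (mu G x p') (mu G y p') →
      ((1 - p')/(1 - p)) * (W1 G (mu G x p) (mu G y p) - p) + p' ≤ cost G π' := by
    intro π' hπ'
    have h1 := W1_le_scale G hxy hp hp1 hp0 hp1' hπ'
    have h2 : W1 G (mu G x p) (mu G y p) - p ≤ ((1 - p)/(1 - p')) * (cost G π' - p') := by
      linarith
    have h3 := mul_le_mul_of_nonneg_left h2 (le_of_lt (div_pos hb' hb))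
    rw [← mul_assoc, hcomp, one_mul] at h3
    linarith
  have h4 := le_W1 (G := G) (plans_nonempty G hxy hp0 hp1'.le) key
  have h6 : ((1 - p')/(1 - p)) * (W1 G (mu G x p) (mu G y p) - p)
      ≤ W1 G (mu G x p') (mu G y p') - p' := by linarith
  have h7 := mul_le_mul_of_nonneg_left h6 (le_of_lt (div_pos hb hb'))
  have hcomp' : ((1 - p)/(1 - p')) * ((1 - p')/(1 - p)) = 1 := by field_simp
  rw [← mul_assoc, hcomp', one_mul] at h7
  linarith

lemma W1_linear {x y : V} (hxy : G.Adj x y) {p : ℝ} (hp : 1/2 ≤ p) (hp1 : p < 1) :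
    W1 G (mu G x p) (mu G y p) - p
      = 2 * (1 - p) * (W1 G (mu G x 2⁻¹) (mu G y 2⁻¹) - 2⁻¹) := by
  have hb : (0:ℝ) < 1 - p := by linarith
  have hbne : (1:ℝ) - p ≠ 0 := ne_of_gt hb
  have h1 : W1 G (mu G x p) (mu G y p)
      ≤ p + ((1 - p)/(1 - 2⁻¹)) * (W1 G (mu G x 2⁻¹) (mu G y 2⁻¹) - 2⁻¹) :=
    W1_scale_ineq G hxy hp hp1 (by norm_num) (by norm_num)
  have h2 : W1 G (mu G x 2⁻¹) (mu G y 2⁻¹)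
      ≤ 2⁻¹ + ((1 - 2⁻¹)/(1 - p)) * (W1 G (mu G x p) (mu G y p) - p) :=
    W1_scale_ineq G hxy (by norm_num) (by norm_num) (by linarith) hp1
  have e1 : ((1 - p)/(1 - 2⁻¹) : ℝ) = 2 * (1 - p) := by
    norm_num; ring
  rw [e1] at h1
  have h2'' : W1 G (mu G x 2⁻¹) (mu G y 2⁻¹) - 2⁻¹
      ≤ ((1 - 2⁻¹)/(1 - p)) * (W1 G (mu G x p) (mu G y p) - p) := by linarith
  have h3 := mul_le_mul_of_nonneg_left h2'' (by positivity : (0:ℝ) ≤ 2 * (1 - p))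
  have e3 : (2 * (1 - p)) * ((1 - 2⁻¹)/(1 - p) : ℝ) = 1 := by
    field_simp
    norm_num
  rw [← mul_assoc, e3, one_mul] at h3
  linarith

lemma kappa_ratio_const {x y : V} (hxy : G.Adj x y) {p : ℝ} (hp : 1/2 ≤ p) (hp1 : p < 1) :
    kappa G p x y / (1 - p)
      = 1 - (2 * W1 G (mu G x 2⁻¹) (mu G y 2⁻¹) - 1) := by
  have hb : (0:ℝ) < 1 - p := by linarith
  have hbne : (1:ℝ) - p ≠ 0 := ne_of_gt hb
  have h := W1_linear G hxy hp hp1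
  unfold kappa
  rw [div_eq_iff hbne]
  nlinarith [h]

end Linear

section MinPlan
open Function Finset

variable {V : Type*} (G : SimpleGraph V) [G.LocallyFinite]

lemma mu_eq_zero_of_not_mem {x : V} {p : ℝ} {z : V}
    (h : z ∉ insert x (G.neighborFinset x)) : mu G x p z = 0 := by
  by_contra h0
  exact h (mu_mem_support G h0)

lemma plan_set_eq {x y : V} (p : ℝ) :
    {π : (V × V) → ℝ | IsPlan π (mu G x p) (mu G y p)}
      = (Set.pi Set.univ (fun q : V × V =>
          if q ∈ (insert x (G.neighborFinset x)) ×ˢ (insert y (G.neighborFinset y))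
          then Set.Icc (0:ℝ) 1 else {0}))
        ∩ ({π | ∀ u ∈ insert x (G.neighborFinset x),
              ∑ v ∈ insert y (G.neighborFinset y), π (u, v) = mu G x p u}
          ∩ {π | ∀ v ∈ insert y (G.neighborFinset y),
              ∑ u ∈ insert x (G.neighborFinset x), π (u, v) = mu G y p v}) := by
  ext π
  set S := insert x (G.neighborFinset x)
  set T := insert y (G.neighborFinset y)
  constructor
  · intro hπ
    have hsupp : support π ⊆ ↑(S ×ˢ T) :=
      hπ.support_subset (mu_support_subset G x p) (mu_support_subset G y p)
    refine ⟨?_, fun u _ => hπ.rowsum (mu_support_subset G y p) u,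
        fun v _ => hπ.colsum (mu_support_subset G x p) v⟩
    intro q _
    show π q ∈ (if q ∈ S ×ˢ T then Set.Icc (0:ℝ) 1 else {0})
    by_cases hq : q ∈ S ×ˢ T
    · rw [if_pos hq]; exact hπ.1 q
    · rw [if_neg hq]
      by_contra h0
      exact hq (by exact_mod_cast hsupp h0)
  · rintro ⟨hK, hM1, hM2⟩
    have hzero : ∀ q : V × V, q ∉ S ×ˢ T → π q = 0 := by
      intro q hq
      have := hK q (Set.mem_univ q)
      simp only [if_neg hq] at this
      exact this
    have hrow_supp : ∀ u, (support fun v => π (u, v)) ⊆ ↑T := by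
      intro u v hv
      by_contra hvT
      exact hv (hzero (u, v) (fun hm => hvT (by
        rw [Finset.mem_product] at hm
        exact_mod_cast hm.2)))
    have hcol_supp : ∀ v, (support fun u => π (u, v)) ⊆ ↑S := by
      intro v u hu
      by_contra huS
      exact hu (hzero (u, v) (fun hm => huS (by
        rw [Finset.mem_product] at hm
        exact_mod_cast hm.1)))
    refine ⟨?_, ?_, ?_, ?_⟩
    · intro q
      by_cases hq : q ∈ S ×ˢ T
      · have := hK q (Set.mem_univ q); simp only [if_pos hq] at this; exact this
      · rw [hzero q hq]; exact ⟨le_refl 0, zero_le_one⟩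
    · apply Set.Finite.subset (S ×ˢ T).finite_toSet
      rintro ⟨u, v⟩ hq
      by_contra hm
      exact hq (hzero (u, v) (by exact_mod_cast hm))
    · intro u
      rw [finsum_eq_sum_of_support_subset _ (hrow_supp u)]
      by_cases hu : u ∈ S
      · exact hM1 u hu
      · rw [mu_eq_zero_of_not_mem G hu]
        apply Finset.sum_eq_zero
        intro v _
        exact hzero (u, v) (fun hm => hu (by
          rw [Finset.mem_product] at hm; exact hm.1))
    · intro v
      rw [finsum_eq_sum_of_support_subset _ (hcol_supp v)]
      by_cases hv : v ∈ T
      · exact hM2 v hv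
      · rw [mu_eq_zero_of_not_mem G hv]
        apply Finset.sum_eq_zero
        intro u _
        exact hzero (u, v) (fun hm => hv (by
          rw [Finset.mem_product] at hm; exact hm.2))

lemma exists_min_plan {x y : V} (hxy : G.Adj x y) {p : ℝ} (h0 : 0 ≤ p) (h1 : p ≤ 1)
    (F : ((V × V) → ℝ) → ℝ) (hF : Continuous F) :
    ∃ π0, IsPlan π0 (mu G x p) (mu G y p) ∧
      ∀ π, IsPlan π (mu G x p) (mu G y p) → F π0 ≤ F π := by
  set S := insert x (G.neighborFinset x)
  set T := insert y (G.neighborFinset y)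
  have hcompact : IsCompact (Set.pi Set.univ (fun q : V × V =>
      if q ∈ S ×ˢ T then Set.Icc (0:ℝ) 1 else {0})) := by
    apply isCompact_univ_pi
    intro q
    split_ifs
    · exact isCompact_Icc
    · exact isCompact_singleton
  have hclosed : IsClosed ({π : (V × V) → ℝ | ∀ u ∈ S, ∑ v ∈ T, π (u, v) = mu G x p u}
      ∩ {π | ∀ v ∈ T, ∑ u ∈ S, π (u, v) = mu G y p v}) := by
    apply IsClosed.inter
    · have : {π : (V × V) → ℝ | ∀ u ∈ S, ∑ v ∈ T, π (u, v) = mu G x p u}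
          = ⋂ u ∈ S, {π : (V × V) → ℝ | ∑ v ∈ T, π (u, v) = mu G x p u} := by
        ext π; simp
      rw [this]
      apply isClosed_biInter
      intro u _
      exact isClosed_eq (by continuity) continuous_const
    · have : {π : (V × V) → ℝ | ∀ v ∈ T, ∑ u ∈ S, π (u, v) = mu G y p v}
          = ⋂ v ∈ T, {π : (V × V) → ℝ | ∑ u ∈ S, π (u, v) = mu G y p v} := by
        ext π; simp
      rw [this]
      apply isClosed_biInter
      intro v _
      exact isClosed_eq (by continuity) continuous_const
  have hPS : IsCompact {π : (V × V) → ℝ | IsPlan π (mu G x p) (mu G y p)} := by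
    rw [plan_set_eq G p]
    exact hcompact.inter_right hclosed
  have hne : {π : (V × V) → ℝ | IsPlan π (mu G x p) (mu G y p)}.Nonempty := by
    obtain ⟨π', hπ'⟩ := plans_nonempty G hxy h0 h1
    exact ⟨π', hπ'⟩
  obtain ⟨π0, hπ0, hmin⟩ := hPS.exists_isMinOn hne hF.continuousOn
  exact ⟨π0, hπ0, fun π hπ => hmin hπ⟩

end MinPlan

section Moves
open Function Finset

variable {V : Type*}

noncomputable def sing (q0 : V × V) (c : ℝ) : (V × V) → ℝ :=
  fun q => if q = q0 then c else 0

lemma sing_self (q0 : V × V) (c : ℝ) : sing q0 c q0 = c := if_pos rfl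

lemma sing_ne {q q0 : V × V} (c : ℝ) (h : q ≠ q0) : sing q0 c q = 0 := if_neg h

lemma sing_fin (q0 : V × V) (c : ℝ) : (support (sing q0 c)).Finite := by
  apply (Set.finite_singleton q0).subset
  intro q hq
  simp only [Set.mem_singleton_iff]
  by_contra hne
  exact hq (sing_ne c hne)

lemma sing_row_fin (q0 : V × V) (c : ℝ) (u : V) :
    (support fun v => sing q0 c (u, v)).Finite := by
  apply (Set.finite_singleton q0.2).subset
  intro v hv
  simp only [Set.mem_singleton_iff]
  by_contra hne
  exact hv (sing_ne c fun h => hne (congrArg Prod.snd h))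

lemma sing_col_fin (q0 : V × V) (c : ℝ) (v : V) :
    (support fun u => sing q0 c (u, v)).Finite := by
  apply (Set.finite_singleton q0.1).subset
  intro u hu
  simp only [Set.mem_singleton_iff]
  by_contra hne
  exact hu (sing_ne c fun h => hne (congrArg Prod.fst h))

lemma sing_row_sum (q0 : V × V) (c : ℝ) (u : V) :
    ∑ᶠ v, sing q0 c (u, v) = if u = q0.1 then c else 0 := by
  rw [finsum_eq_single _ q0.2 (fun v hv => sing_ne c (fun h => hv (congrArg Prod.snd h)))]
  by_cases h : u = q0.1
  · rw [if_pos h, h, Prod.mk.eta, sing_self]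
  · rw [if_neg h]
    exact sing_ne c (fun hq => h (congrArg Prod.fst hq))

lemma sing_col_sum (q0 : V × V) (c : ℝ) (v : V) :
    ∑ᶠ u, sing q0 c (u, v) = if v = q0.2 then c else 0 := by
  rw [finsum_eq_single _ q0.1 (fun u hu => sing_ne c (fun h => hu (congrArg Prod.fst h)))]
  by_cases h : v = q0.2
  · rw [if_pos h, h, Prod.mk.eta, sing_self]
  · rw [if_neg h]
    exact sing_ne c (fun hq => h (congrArg Prod.snd hq))

lemma fin_supp_add {α : Type*} {f g : α → ℝ} (hf : (support f).Finite)
    (hg : (support g).Finite) : (support fun v => f v + g v).Finite :=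
  (hf.union hg).subset (Function.support_add f g)

lemma finsum_add6 {α : Type*} {f1 f2 f3 f4 f5 f6 : α → ℝ}
    (h1 : (support f1).Finite) (h2 : (support f2).Finite) (h3 : (support f3).Finite)
    (h4 : (support f4).Finite) (h5 : (support f5).Finite) (h6 : (support f6).Finite) :
    ∑ᶠ v, (f1 v + f2 v + f3 v + f4 v + f5 v + f6 v)
      = (∑ᶠ v, f1 v) + (∑ᶠ v, f2 v) + (∑ᶠ v, f3 v)
        + (∑ᶠ v, f4 v) + (∑ᶠ v, f5 v) + (∑ᶠ v, f6 v) := by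
  have h12 := fin_supp_add h1 h2
  have h123 := fin_supp_add h12 h3
  have h1234 := fin_supp_add h123 h4
  have h12345 := fin_supp_add h1234 h5
  rw [finsum_add_distrib h12345 h6, finsum_add_distrib h1234 h5,
    finsum_add_distrib h123 h4, finsum_add_distrib h12 h3, finsum_add_distrib h1 h2]

/-- perturbation of a plan by six signed point masses -/
lemma isPlan_move6 {G : SimpleGraph V} [G.LocallyFinite] {x y : V} {p : ℝ}
    {π : (V × V) → ℝ} (hπ : IsPlan π (mu G x p) (mu G y p))
    (q1 q2 q3 q4 q5 q6 : V × V) (c1 c2 c3 c4 c5 c6 : ℝ)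
    (hrow : ∀ u : V, (if u = q1.1 then c1 else 0) + (if u = q2.1 then c2 else 0)
      + (if u = q3.1 then c3 else 0) + (if u = q4.1 then c4 else 0)
      + (if u = q5.1 then c5 else 0) + (if u = q6.1 then c6 else 0) = 0)
    (hcol : ∀ v : V, (if v = q1.2 then c1 else 0) + (if v = q2.2 then c2 else 0)
      + (if v = q3.2 then c3 else 0) + (if v = q4.2 then c4 else 0)
      + (if v = q5.2 then c5 else 0) + (if v = q6.2 then c6 else 0) = 0)
    (hbdd : ∀ q, π q + (sing q1 c1 q + sing q2 c2 q + sing q3 c3 q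
      + sing q4 c4 q + sing q5 c5 q + sing q6 c6 q) ∈ Set.Icc (0:ℝ) 1) :
    IsPlan (fun q => π q + (sing q1 c1 q + sing q2 c2 q + sing q3 c3 q
      + sing q4 c4 q + sing q5 c5 q + sing q6 c6 q)) (mu G x p) (mu G y p) := by
  set e : (V × V) → ℝ := fun q => sing q1 c1 q + sing q2 c2 q + sing q3 c3 q
      + sing q4 c4 q + sing q5 c5 q + sing q6 c6 q with he
  have hefin : (support e).Finite := by
    rw [he]
    exact fin_supp_add (fin_supp_add (fin_supp_add (fin_supp_add (fin_supp_add
      (sing_fin q1 c1) (sing_fin q2 c2)) (sing_fin q3 c3)) (sing_fin q4 c4))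
      (sing_fin q5 c5)) (sing_fin q6 c6)
  have herowfin : ∀ u, (support fun v => e (u, v)).Finite := fun u =>
    fin_supp_add (fin_supp_add (fin_supp_add (fin_supp_add (fin_supp_add
      (sing_row_fin q1 c1 u) (sing_row_fin q2 c2 u)) (sing_row_fin q3 c3 u))
      (sing_row_fin q4 c4 u)) (sing_row_fin q5 c5 u)) (sing_row_fin q6 c6 u)
  have hecolfin : ∀ v, (support fun u => e (u, v)).Finite := fun v =>
    fin_supp_add (fin_supp_add (fin_supp_add (fin_supp_add (fin_supp_add
      (sing_col_fin q1 c1 v) (sing_col_fin q2 c2 v)) (sing_col_fin q3 c3 v))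
      (sing_col_fin q4 c4 v)) (sing_col_fin q5 c5 v)) (sing_col_fin q6 c6 v)
  refine ⟨hbdd, ?_, ?_, ?_⟩
  · exact (hπ.2.1.union hefin).subset (Function.support_add π e)
  · intro u
    rw [finsum_add_distrib (hπ.row_finite u) (herowfin u)]
    have : ∑ᶠ v, e (u, v) = 0 := by
      rw [he]
      rw [finsum_add6 (sing_row_fin q1 c1 u) (sing_row_fin q2 c2 u) (sing_row_fin q3 c3 u)
        (sing_row_fin q4 c4 u) (sing_row_fin q5 c5 u) (sing_row_fin q6 c6 u)]
      rw [sing_row_sum, sing_row_sum, sing_row_sum, sing_row_sum, sing_row_sum, sing_row_sum]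
      exact hrow u
    rw [this, add_zero, hπ.2.2.1 u]
  · intro v
    rw [finsum_add_distrib (hπ.col_finite v) (hecolfin v)]
    have : ∑ᶠ u, e (u, v) = 0 := by
      rw [he]
      rw [finsum_add6 (sing_col_fin q1 c1 v) (sing_col_fin q2 c2 v) (sing_col_fin q3 c3 v)
        (sing_col_fin q4 c4 v) (sing_col_fin q5 c5 v) (sing_col_fin q6 c6 v)]
      rw [sing_col_sum, sing_col_sum, sing_col_sum, sing_col_sum, sing_col_sum, sing_col_sum]
      exact hcol v
    rw [this, add_zero, hπ.2.2.2 v]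

end Moves

section Clean
open Function Finset

variable {V : Type*} (G : SimpleGraph V) [G.LocallyFinite]

lemma mu_le_one {x : V} (hdx : 0 < G.degree x) {p : ℝ} (h0 : 0 ≤ p) (h1 : p ≤ 1) (z : V) :
    mu G x p z ≤ 1 := by
  by_cases hz : z = x
  · rw [hz, mu_apply_self]; exact h1
  · exact (mu_le_one_sub G h1 hdx hz).trans (by linarith)

lemma pair_le_row {x y : V} {p : ℝ} {π : (V × V) → ℝ}
    (hπ : IsPlan π (mu G x p) (mu G y p)) {u a b : V} (hab : a ≠ b)
    (ha : a ∈ insert y (G.neighborFinset y)) (hb : b ∈ insert y (G.neighborFinset y)) :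
    π (u, a) + π (u, b) ≤ mu G x p u := by
  rw [← hπ.rowsum (mu_support_subset G y p) u,
    ← Finset.sum_pair (f := fun v => π (u, v)) hab]
  apply Finset.sum_le_sum_of_subset_of_nonneg
  · intro v hv
    rcases Finset.mem_insert.mp hv with h | h
    · rwa [h]
    · rwa [Finset.mem_singleton.mp h]
  · intro v _ _; exact hπ.nonneg _

lemma pair_le_col {x y : V} {p : ℝ} {π : (V × V) → ℝ}
    (hπ : IsPlan π (mu G x p) (mu G y p)) {v a b : V} (hab : a ≠ b)
    (ha : a ∈ insert x (G.neighborFinset x)) (hb : b ∈ insert x (G.neighborFinset x)) :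
    π (a, v) + π (b, v) ≤ mu G y p v := by
  rw [← hπ.colsum (mu_support_subset G x p) v,
    ← Finset.sum_pair (f := fun u => π (u, v)) hab]
  have : ∑ u ∈ ({a, b} : Finset V), π (u, v)
      ≤ ∑ u ∈ insert x (G.neighborFinset x), π (u, v) := by
    apply Finset.sum_le_sum_of_subset_of_nonneg
    · intro w hw
      rcases Finset.mem_insert.mp hw with h | h
      · rwa [h]
      · rwa [Finset.mem_singleton.mp h]
    · intro w _ _; exact hπ.nonneg _
  exact this

set_option maxHeartbeats 1000000 in
lemma clean_min_plan (hG : G.Connected) {x y : V} (hxy : G.Adj x y)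
    (hd : G.degree y ≤ G.degree x) {p : ℝ} (hp : 1/2 ≤ p) (hp1 : p < 1)
    {η : ℝ} (hη : 0 < η) :
    ∃ π0, IsPlan π0 (mu G x p) (mu G y p) ∧
      cost G π0 ≤ W1 G (mu G x p) (mu G y p) + η ∧
      (∀ u ∈ G.neighborFinset x ∩ G.neighborFinset y, π0 (u, y) = 0) := by
  have hdx : 0 < G.degree x := (G.degree_pos_iff_exists_adj x).mpr ⟨y, hxy⟩
  have hdy : 0 < G.degree y := (G.degree_pos_iff_exists_adj y).mpr ⟨x, hxy.symm⟩
  have hp0 : (0:ℝ) ≤ p := by linarith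
  have hβ : (0:ℝ) < 1 - p := by linarith
  set S := insert x (G.neighborFinset x) with hS
  set T := insert y (G.neighborFinset y) with hT
  set NN := G.neighborFinset x ∩ G.neighborFinset y with hNN
  set F : ((V × V) → ℝ) → ℝ := fun π =>
    (∑ q ∈ S ×ˢ T, (G.dist q.1 q.2 : ℝ) * π q) + η * ∑ u ∈ NN, π (u, y) with hF
  have hFc : Continuous F := by
    apply Continuous.add
    · exact continuous_finset_sum _ (fun q _ => continuous_const.mul (continuous_apply q))
    · exact continuous_const.mul (continuous_finset_sum _ fun u _ => continuous_apply (u, y))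
  obtain ⟨π0, hπ0, hmin⟩ := exists_min_plan G hxy hp0 hp1.le F hFc
  have hcost0 : cost G π0 = ∑ q ∈ S ×ˢ T, (G.dist q.1 q.2 : ℝ) * π0 q :=
    cost_eq_sum hπ0 (mu_support_subset G x p) (mu_support_subset G y p)
  -- the second part of F is small and nonneg
  have hBle : ∀ π : (V × V) → ℝ, IsPlan π (mu G x p) (mu G y p) →
      ∑ u ∈ NN, π (u, y) ≤ 1 := by
    intro π hπ
    have h1 : ∑ u ∈ NN, π (u, y) ≤ ∑ u ∈ S, π (u, y) := by
      apply Finset.sum_le_sum_of_subset_of_nonneg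
      · intro w hw
        exact Finset.mem_insert_of_mem (Finset.mem_of_mem_inter_left hw)
      · intro w _ _; exact hπ.nonneg _
    rw [hπ.colsum (mu_support_subset G x p) y, mu_apply_self] at h1
    linarith
  have hBnn : ∀ π : (V × V) → ℝ, (∀ q, 0 ≤ π q) → 0 ≤ ∑ u ∈ NN, π (u, y) :=
    fun π hπ => Finset.sum_nonneg fun u _ => hπ _
  -- cost bound
  have hcost_le : cost G π0 ≤ W1 G (mu G x p) (mu G y p) + η := by
    have key : ∀ π, IsPlan π (mu G x p) (mu G y p) → cost G π0 - η ≤ cost G π := by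
      intro π hπ
      have h1 := hmin π hπ
      have h2 : cost G π = ∑ q ∈ S ×ˢ T, (G.dist q.1 q.2 : ℝ) * π q :=
        cost_eq_sum hπ (mu_support_subset G x p) (mu_support_subset G y p)
      have h3 := hBle π hπ
      have h4 := hBnn π0 hπ0.nonneg
      have h5 := hBnn π hπ.nonneg
      rw [hF] at h1
      simp only at h1
      nlinarith [h1]
    have := le_W1 (G := G) (plans_nonempty G hxy hp0 hp1.le) key
    linarith
  refine ⟨π0, hπ0, hcost_le, ?_⟩
  -- cleaning
  intro u0 hu0
  by_contra hs0
  have hu0x : G.Adj x u0 := by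
    have := Finset.mem_of_mem_inter_left hu0
    rwa [SimpleGraph.mem_neighborFinset] at this
  have hu0y : G.Adj y u0 := by
    have := Finset.mem_of_mem_inter_right hu0
    rwa [SimpleGraph.mem_neighborFinset] at this
  have hu0nex : u0 ≠ x := hu0x.ne'
  have hu0ney : u0 ≠ y := hu0y.ne'
  have hxands : x ≠ u0 := hu0x.ne
  have hyneu0 : y ≠ u0 := hu0y.ne
  have hxney : x ≠ y := hxy.ne
  have hu0S : u0 ∈ S := Finset.mem_insert_of_mem ((SimpleGraph.mem_neighborFinset G x u0).mpr hu0x)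
  have hu0T : u0 ∈ T := Finset.mem_insert_of_mem ((SimpleGraph.mem_neighborFinset G y u0).mpr hu0y)
  have hxS : x ∈ S := Finset.mem_insert_self x _
  have hyT : y ∈ T := Finset.mem_insert_self y _
  have hxT : x ∈ T := Finset.mem_insert_of_mem ((SimpleGraph.mem_neighborFinset G y x).mpr hxy.symm)
  have hyS : y ∈ S := Finset.mem_insert_of_mem ((SimpleGraph.mem_neighborFinset G x y).mpr hxy)
  have hs : 0 < π0 (u0, y) := lt_of_le_of_ne (hπ0.nonneg _) (Ne.symm hs0)
  -- distances
  have dxy : (G.dist x y : ℝ) = 1 := by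
    rw [SimpleGraph.dist_eq_one_iff_adj.mpr hxy]; norm_num
  have du0y : (G.dist u0 y : ℝ) = 1 := by
    rw [SimpleGraph.dist_eq_one_iff_adj.mpr hu0y.symm]; norm_num
  have dxu0 : (G.dist x u0 : ℝ) = 1 := by
    rw [SimpleGraph.dist_eq_one_iff_adj.mpr hu0x]; norm_num
  have du0u0 : (G.dist u0 u0 : ℝ) = 0 := by
    rw [SimpleGraph.dist_self]; norm_num
  -- helper sums for F computations
  have sum_sing_E : ∀ (q0 : V × V) (c : ℝ), q0 ∈ S ×ˢ T →
      ∑ q ∈ S ×ˢ T, (G.dist q.1 q.2 : ℝ) * sing q0 c q = (G.dist q0.1 q0.2 : ℝ) * c := by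
    intro q0 c hq0
    rw [Finset.sum_eq_single q0 (fun b _ hb => by rw [sing_ne c hb, mul_zero])
      (fun h => absurd hq0 h), sing_self]
  have sum_sing_NN_miss : ∀ (q0 : V × V) (c : ℝ), (∀ u ∈ NN, (u, y) ≠ q0) →
      ∑ u ∈ NN, sing q0 c (u, y) = 0 :=
    fun q0 c h => Finset.sum_eq_zero fun u hu => sing_ne c (h u hu)
  have sum_sing_NN_hit : ∀ c : ℝ, ∑ u ∈ NN, sing (u0, y) c (u, y) = c := by
    intro c
    rw [Finset.sum_eq_single u0 (fun b _ hb => sing_ne c (fun h => hb (congrArg Prod.fst h)))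
      (fun h => absurd hu0 h), sing_self]
  have hNNnex : ∀ u ∈ NN, u ≠ x := by
    intro u hu
    have := Finset.mem_of_mem_inter_left hu
    rw [SimpleGraph.mem_neighborFinset] at this
    exact this.ne'
  by_cases hr0 : π0 (x, u0) = 0
  · -- Case B : find w and v0 and perform the 6-cell move
    -- find v0
    have hxyley : π0 (x, y) + π0 (u0, y) ≤ p := by
      have := pair_le_col G hπ0 (v := y) hxands hxS hu0S
      rwa [mu_apply_self] at this
    have hrowx := hπ0.rowsum (mu_support_subset G y p) x
    rw [mu_apply_self] at hrowx
    have hTerase : ∑ v ∈ T.erase y, π0 (x, v) = p - π0 (x, y) := by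
      have := Finset.add_sum_erase T (fun v => π0 (x, v)) hyT
      linarith
    have hexv0 : ∃ v0 ∈ T.erase y, π0 (x, v0) ≠ 0 := by
      by_contra hall
      push_neg at hall
      have : ∑ v ∈ T.erase y, π0 (x, v) = 0 := Finset.sum_eq_zero hall
      rw [hTerase] at this
      linarith
    obtain ⟨v0, hv0mem, hv0ne⟩ := hexv0
    have hv0T : v0 ∈ T := Finset.mem_of_mem_erase hv0mem
    have hv0ney : v0 ≠ y := Finset.ne_of_mem_erase hv0mem
    have hrv0 : 0 < π0 (x, v0) := lt_of_le_of_ne (hπ0.nonneg _) (Ne.symm hv0ne)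
    have hv0neu0 : v0 ≠ u0 := by
      intro h; rw [h] at hv0ne; exact hv0ne hr0
    -- find w
    have hcolu0 := hπ0.colsum (mu_support_subset G x p) u0
    rw [mu_apply_adj G p hu0y] at hcolu0
    have hu0pair : π0 (u0, u0) + π0 (u0, y) ≤ (1 - p) / (G.degree x) := by
      have := pair_le_row G hπ0 (u := u0) hu0ney hu0T hyT
      rwa [mu_apply_adj G p hu0x] at this
    have hdydx : (1 - p) / (G.degree x) ≤ (1 - p) / (G.degree y) := by
      apply div_le_div_of_nonneg_left hβ.le (by exact_mod_cast hdy)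
      exact_mod_cast hd
    have hSsum : ∑ u ∈ (S.erase x).erase u0, π0 (u, u0)
        = (1 - p)/(G.degree y) - π0 (x, u0) - π0 (u0, u0) := by
      have h1 := Finset.add_sum_erase S (fun u => π0 (u, u0)) hxS
      have h2 := Finset.add_sum_erase (S.erase x) (fun u => π0 (u, u0))
        (Finset.mem_erase.mpr ⟨hu0nex, hu0S⟩)
      linarith
    have hexw : ∃ w ∈ (S.erase x).erase u0, π0 (w, u0) ≠ 0 := by
      by_contra hall
      push_neg at hall
      have h0 : ∑ u ∈ (S.erase x).erase u0, π0 (u, u0) = 0 := Finset.sum_eq_zero hall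
      rw [hSsum, hr0] at h0
      linarith
    obtain ⟨w, hwmem, hwne⟩ := hexw
    have hwneu0 : w ≠ u0 := Finset.ne_of_mem_erase hwmem
    have hwnex : w ≠ x := Finset.ne_of_mem_erase (Finset.mem_of_mem_erase hwmem)
    have hwS : w ∈ S := Finset.mem_of_mem_erase (Finset.mem_of_mem_erase hwmem)
    have hwNx : G.Adj x w := by
      rcases Finset.mem_insert.mp hwS with h | h
      · exact absurd h hwnex
      · rwa [SimpleGraph.mem_neighborFinset] at h
    have htw : 0 < π0 (w, u0) := lt_of_le_of_ne (hπ0.nonneg _) (Ne.symm hwne)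
    -- distances for case B
    have dwx : G.dist w x = 1 := SimpleGraph.dist_eq_one_iff_adj.mpr hwNx.symm
    have dwv0 : (G.dist w v0 : ℝ) ≤ 1 + (G.dist x v0 : ℝ) := by
      have h1 : G.dist w v0 ≤ G.dist w x + G.dist x v0 := hG.dist_triangle
      rw [dwx] at h1
      exact_mod_cast h1
    have dwu0 : (1:ℝ) ≤ (G.dist w u0 : ℝ) := by
      have h1 : 0 < G.dist w u0 := hG.pos_dist_of_ne hwneu0
      have h2 : 1 ≤ G.dist w u0 := h1
      exact_mod_cast h2
    set δ := min (π0 (u0, y)) (min (π0 (x, v0)) (π0 (w, u0))) with hδdef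
    have hδ0 : 0 < δ := lt_min hs (lt_min hrv0 htw)
    have hδs : δ ≤ π0 (u0, y) := min_le_left _ _
    have hδr : δ ≤ π0 (x, v0) := (min_le_right _ _).trans (min_le_left _ _)
    have hδt : δ ≤ π0 (w, u0) := (min_le_right _ _).trans (min_le_right _ _)
    -- the 6 cells
    -- +(x,y), +(u0,u0), +(w,v0) ; -(u0,y), -(x,v0), -(w,u0)
    set e : (V × V) → ℝ := fun q => sing (x, y) δ q + sing (u0, u0) δ q + sing (w, v0) δ q
      + sing (u0, y) (-δ) q + sing (x, v0) (-δ) q + sing (w, u0) (-δ) q with he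
    -- ne facts between cells
    have n12 : ((x, y) : V × V) ≠ (u0, u0) := fun h => hxands (congrArg Prod.fst h)
    have n14 : ((x, y) : V × V) ≠ (u0, y) := fun h => hxands (congrArg Prod.fst h)
    have n15 : ((x, y) : V × V) ≠ (x, v0) := fun h => hv0ney (congrArg Prod.snd h).symm
    have n16 : ((x, y) : V × V) ≠ (w, u0) := fun h => hwnex (congrArg Prod.fst h).symm
    have n13 : ((x, y) : V × V) ≠ (w, v0) := fun h => hwnex (congrArg Prod.fst h).symm
    have n21 : ((u0, u0) : V × V) ≠ (x, y) := fun h => hu0nex (congrArg Prod.fst h)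
    have n23 : ((u0, u0) : V × V) ≠ (w, v0) := fun h => hwneu0 (congrArg Prod.fst h).symm
    have n24 : ((u0, u0) : V × V) ≠ (u0, y) := fun h => hu0ney (congrArg Prod.snd h)
    have n25 : ((u0, u0) : V × V) ≠ (x, v0) := fun h => hu0nex (congrArg Prod.fst h)
    have n26 : ((u0, u0) : V × V) ≠ (w, u0) := fun h => hwneu0 (congrArg Prod.fst h).symm
    have n31 : ((w, v0) : V × V) ≠ (x, y) := fun h => hwnex (congrArg Prod.fst h)
    have n32 : ((w, v0) : V × V) ≠ (u0, u0) := fun h => hv0neu0 (congrArg Prod.snd h)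
    have n34 : ((w, v0) : V × V) ≠ (u0, y) := fun h => hv0ney (congrArg Prod.snd h)
    have n35 : ((w, v0) : V × V) ≠ (x, v0) := fun h => hwnex (congrArg Prod.fst h)
    have n36 : ((w, v0) : V × V) ≠ (w, u0) := fun h => hv0neu0 (congrArg Prod.snd h)
    have n41 : ((u0, y) : V × V) ≠ (x, y) := fun h => hu0nex (congrArg Prod.fst h)
    have n42 : ((u0, y) : V × V) ≠ (u0, u0) := fun h => hyneu0 (congrArg Prod.snd h)
    have n43 : ((u0, y) : V × V) ≠ (w, v0) := fun h => hwneu0 (congrArg Prod.fst h).symm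
    have n45 : ((u0, y) : V × V) ≠ (x, v0) := fun h => hu0nex (congrArg Prod.fst h)
    have n46 : ((u0, y) : V × V) ≠ (w, u0) := fun h => hwneu0 (congrArg Prod.fst h).symm
    have n51 : ((x, v0) : V × V) ≠ (x, y) := fun h => hv0ney (congrArg Prod.snd h)
    have n52 : ((x, v0) : V × V) ≠ (u0, u0) := fun h => hu0nex (congrArg Prod.fst h).symm
    have n53 : ((x, v0) : V × V) ≠ (w, v0) := fun h => hwnex (congrArg Prod.fst h).symm
    have n54 : ((x, v0) : V × V) ≠ (u0, y) := fun h => hu0nex (congrArg Prod.fst h).symm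
    have n56 : ((x, v0) : V × V) ≠ (w, u0) := fun h => hwnex (congrArg Prod.fst h).symm
    have n61 : ((w, u0) : V × V) ≠ (x, y) := fun h => hwnex (congrArg Prod.fst h)
    have n62 : ((w, u0) : V × V) ≠ (u0, u0) := fun h => hwneu0 (congrArg Prod.fst h)
    have n63 : ((w, u0) : V × V) ≠ (w, v0) := fun h => hv0neu0 (congrArg Prod.snd h).symm
    have n64 : ((w, u0) : V × V) ≠ (u0, y) := fun h => hwneu0 (congrArg Prod.fst h)
    have n65 : ((w, u0) : V × V) ≠ (x, v0) := fun h => hwnex (congrArg Prod.fst h)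
    -- evaluations of e
    have ev1 : e (x, y) = δ := by
      rw [he]; simp only []
      rw [sing_self, sing_ne _ n12, sing_ne _ n13, sing_ne _ n14, sing_ne _ n15, sing_ne _ n16]
      ring
    have ev2 : e (u0, u0) = δ := by
      rw [he]; simp only []
      rw [sing_self, sing_ne _ n21, sing_ne _ n23, sing_ne _ n24, sing_ne _ n25, sing_ne _ n26]
      ring
    have ev3 : e (w, v0) = δ := by
      rw [he]; simp only []
      rw [sing_self, sing_ne _ n31, sing_ne _ n32, sing_ne _ n34, sing_ne _ n35, sing_ne _ n36]
      ring
    have ev4 : e (u0, y) = -δ := by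
      rw [he]; simp only []
      rw [sing_self, sing_ne _ n41, sing_ne _ n42, sing_ne _ n43, sing_ne _ n45, sing_ne _ n46]
      ring
    have ev5 : e (x, v0) = -δ := by
      rw [he]; simp only []
      rw [sing_self, sing_ne _ n51, sing_ne _ n52, sing_ne _ n53, sing_ne _ n54, sing_ne _ n56]
      ring
    have ev6 : e (w, u0) = -δ := by
      rw [he]; simp only []
      rw [sing_self, sing_ne _ n61, sing_ne _ n62, sing_ne _ n63, sing_ne _ n64, sing_ne _ n65]
      ring
    have ev0 : ∀ q, q ≠ (x, y) → q ≠ (u0, u0) → q ≠ (w, v0) → q ≠ (u0, y) → q ≠ (x, v0)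
        → q ≠ (w, u0) → e q = 0 := by
      intro q h1 h2 h3 h4 h5 h6
      rw [he]; simp only []
      rw [sing_ne _ h1, sing_ne _ h2, sing_ne _ h3, sing_ne _ h4, sing_ne _ h5, sing_ne _ h6]
      ring
    -- the moved plan
    have hbdd : ∀ q, π0 q + e q ∈ Set.Icc (0:ℝ) 1 := by
      intro q
      by_cases h1 : q = (x, y)
      · subst h1
        rw [ev1]
        constructor
        · have := hπ0.nonneg ((x, y) : V × V); linarith
        · have hpr : π0 (x, y) + π0 (x, v0) ≤ p := by
            have := pair_le_row G hπ0 (u := x) (Ne.symm hv0ney) hyT hv0T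
            rwa [mu_apply_self] at this
          linarith
      by_cases h2 : q = (u0, u0)
      · subst h2
        rw [ev2]
        constructor
        · have := hπ0.nonneg ((u0, u0) : V × V); linarith
        · have h3 : (1 - p)/(G.degree x : ℝ) ≤ 1 := by
            have := mu_le_one G hdx hp0 hp1.le u0
            rwa [mu_apply_adj G p hu0x] at this
          linarith
      by_cases h3 : q = (w, v0)
      · subst h3
        rw [ev3]
        constructor
        · have := hπ0.nonneg ((w, v0) : V × V); linarith
        · have hpr : π0 (w, v0) + π0 (w, u0) ≤ mu G x p w :=
            pair_le_row G hπ0 (u := w) hv0neu0 hv0T hu0T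
          have := mu_le_one G hdx hp0 hp1.le w
          linarith
      by_cases h4 : q = (u0, y)
      · subst h4
        rw [ev4]
        constructor
        · linarith
        · have := (hπ0.1 ((u0, y) : V × V)).2; linarith
      by_cases h5 : q = (x, v0)
      · subst h5
        rw [ev5]
        constructor
        · linarith
        · have := (hπ0.1 ((x, v0) : V × V)).2; linarith
      by_cases h6 : q = (w, u0)
      · subst h6
        rw [ev6]
        constructor
        · linarith
        · have := (hπ0.1 ((w, u0) : V × V)).2; linarith
      · rw [ev0 q h1 h2 h3 h4 h5 h6, add_zero]
        exact hπ0.1 q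
    have hplan' : IsPlan (fun q => π0 q + e q) (mu G x p) (mu G y p) := by
      have := isPlan_move6 hπ0 (x, y) (u0, u0) (w, v0) (u0, y) (x, v0) (w, u0)
        δ δ δ (-δ) (-δ) (-δ)
        (fun u => by split_ifs <;> ring)
        (fun v => by split_ifs <;> ring)
        (fun q => hbdd q)
      exact this
    -- F difference
    have hFdiff : F (fun q => π0 q + e q) = F π0
        + ((G.dist x y : ℝ) * δ + (G.dist u0 u0 : ℝ) * δ + (G.dist w v0 : ℝ) * δ
          + (G.dist u0 y : ℝ) * (-δ) + (G.dist x v0 : ℝ) * (-δ) + (G.dist w u0 : ℝ) * (-δ))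
        + η * (-δ) := by
      rw [hF]
      simp only [he, mul_add, Finset.sum_add_distrib]
      rw [sum_sing_E (x, y) δ (Finset.mem_product.mpr ⟨hxS, hyT⟩),
        sum_sing_E (u0, u0) δ (Finset.mem_product.mpr ⟨hu0S, hu0T⟩),
        sum_sing_E (w, v0) δ (Finset.mem_product.mpr ⟨hwS, hv0T⟩),
        sum_sing_E (u0, y) (-δ) (Finset.mem_product.mpr ⟨hu0S, hyT⟩),
        sum_sing_E (x, v0) (-δ) (Finset.mem_product.mpr ⟨hxS, hv0T⟩),
        sum_sing_E (w, u0) (-δ) (Finset.mem_product.mpr ⟨hwS, hu0T⟩),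
        sum_sing_NN_miss (x, y) δ (fun u hu h => hNNnex u hu (congrArg Prod.fst h)),
        sum_sing_NN_miss (u0, u0) δ (fun u hu h => hu0ney (congrArg Prod.snd h).symm),
        sum_sing_NN_miss (w, v0) δ (fun u hu h => hv0ney (congrArg Prod.snd h).symm),
        sum_sing_NN_hit (-δ),
        sum_sing_NN_miss (x, v0) (-δ) (fun u hu h => hv0ney (congrArg Prod.snd h).symm),
        sum_sing_NN_miss (w, u0) (-δ) (fun u hu h => hu0ney ((congrArg Prod.snd h).symm.trans rfl))]
      ring
    have hcontr := hmin _ hplan'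
    rw [hFdiff, dxy, du0u0, du0y] at hcontr
    nlinarith [hcontr, dwv0, dwu0, hδ0, hη]
  · -- Case A : the 4-cell move  +(x,y), +(u0,u0) ; -(u0,y), -(x,u0)
    have hr : 0 < π0 (x, u0) := lt_of_le_of_ne (hπ0.nonneg _) (Ne.symm hr0)
    set δ := min (π0 (u0, y)) (π0 (x, u0)) with hδdef
    have hδ0 : 0 < δ := lt_min hs hr
    have hδs : δ ≤ π0 (u0, y) := min_le_left _ _
    have hδr : δ ≤ π0 (x, u0) := min_le_right _ _
    set e : (V × V) → ℝ := fun q => sing (x, y) δ q + sing (u0, u0) δ q + sing (x, y) 0 q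
      + sing (u0, y) (-δ) q + sing (x, u0) (-δ) q + sing (x, y) 0 q with he
    have n12 : ((x, y) : V × V) ≠ (u0, u0) := fun h => hxands (congrArg Prod.fst h)
    have n14 : ((x, y) : V × V) ≠ (u0, y) := fun h => hxands (congrArg Prod.fst h)
    have n15 : ((x, y) : V × V) ≠ (x, u0) := fun h => hyneu0 (congrArg Prod.snd h)
    have n21 : ((u0, u0) : V × V) ≠ (x, y) := fun h => hu0nex (congrArg Prod.fst h)
    have n24 : ((u0, u0) : V × V) ≠ (u0, y) := fun h => hu0ney (congrArg Prod.snd h)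
    have n25 : ((u0, u0) : V × V) ≠ (x, u0) := fun h => hu0nex (congrArg Prod.fst h)
    have n41 : ((u0, y) : V × V) ≠ (x, y) := fun h => hu0nex (congrArg Prod.fst h)
    have n42 : ((u0, y) : V × V) ≠ (u0, u0) := fun h => hyneu0 (congrArg Prod.snd h)
    have n45 : ((u0, y) : V × V) ≠ (x, u0) := fun h => hu0nex (congrArg Prod.fst h)
    have n51 : ((x, u0) : V × V) ≠ (x, y) := fun h => hu0ney (congrArg Prod.snd h)
    have n52 : ((x, u0) : V × V) ≠ (u0, u0) := fun h => hu0nex (congrArg Prod.fst h).symm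
    have n54 : ((x, u0) : V × V) ≠ (u0, y) := fun h => hu0nex (congrArg Prod.fst h).symm
    have ev1 : e (x, y) = δ := by
      rw [he]; simp only []
      rw [sing_self, sing_ne _ n12, sing_self, sing_ne _ n14, sing_ne _ n15]
      ring
    have ev2 : e (u0, u0) = δ := by
      rw [he]; simp only []
      rw [sing_ne _ n21, sing_self, sing_ne _ n21, sing_ne _ n24, sing_ne _ n25]
      ring
    have ev4 : e (u0, y) = -δ := by
      rw [he]; simp only []
      rw [sing_ne _ n41, sing_ne _ n42, sing_ne _ n41, sing_self, sing_ne _ n45]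
      ring
    have ev5 : e (x, u0) = -δ := by
      rw [he]; simp only []
      rw [sing_ne _ n51, sing_ne _ n52, sing_ne _ n51, sing_ne _ n54, sing_self]
      ring
    have ev0 : ∀ q, q ≠ (x, y) → q ≠ (u0, u0) → q ≠ (u0, y) → q ≠ (x, u0) → e q = 0 := by
      intro q h1 h2 h4 h5
      rw [he]; simp only []
      rw [sing_ne _ h1, sing_ne _ h2, sing_ne _ h1, sing_ne _ h4, sing_ne _ h5]
      ring
    have hbdd : ∀ q, π0 q + e q ∈ Set.Icc (0:ℝ) 1 := by
      intro q
      by_cases h1 : q = (x, y)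
      · subst h1
        rw [ev1]
        constructor
        · have := hπ0.nonneg ((x, y) : V × V); linarith
        · have hpr : π0 (x, y) + π0 (x, u0) ≤ p := by
            have := pair_le_row G hπ0 (u := x) hyneu0 hyT hu0T
            rwa [mu_apply_self] at this
          linarith
      by_cases h2 : q = (u0, u0)
      · subst h2
        rw [ev2]
        constructor
        · have := hπ0.nonneg ((u0, u0) : V × V); linarith
        · have hpr : π0 (u0, u0) + π0 (u0, y) ≤ mu G x p u0 :=
            pair_le_row G hπ0 hu0ney hu0T hyT
          have := mu_le_one G hdx hp0 hp1.le u0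
          linarith
      by_cases h4 : q = (u0, y)
      · subst h4
        rw [ev4]
        constructor
        · linarith
        · have := (hπ0.1 ((u0, y) : V × V)).2; linarith
      by_cases h5 : q = (x, u0)
      · subst h5
        rw [ev5]
        constructor
        · linarith
        · have := (hπ0.1 ((x, u0) : V × V)).2; linarith
      · rw [ev0 q h1 h2 h4 h5, add_zero]
        exact hπ0.1 q
    have hplan' : IsPlan (fun q => π0 q + e q) (mu G x p) (mu G y p) := by
      have := isPlan_move6 hπ0 (x, y) (u0, u0) (x, y) (u0, y) (x, u0) (x, y)
        δ δ 0 (-δ) (-δ) 0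
        (fun u => by split_ifs <;> ring)
        (fun v => by split_ifs <;> ring)
        (fun q => hbdd q)
      exact this
    have hFdiff : F (fun q => π0 q + e q) = F π0
        + ((G.dist x y : ℝ) * δ + (G.dist u0 u0 : ℝ) * δ + (G.dist x y : ℝ) * 0
          + (G.dist u0 y : ℝ) * (-δ) + (G.dist x u0 : ℝ) * (-δ) + (G.dist x y : ℝ) * 0)
        + η * (-δ) := by
      rw [hF]
      simp only [he, mul_add, Finset.sum_add_distrib]
      rw [sum_sing_E (x, y) δ (Finset.mem_product.mpr ⟨hxS, hyT⟩),
        sum_sing_E (u0, u0) δ (Finset.mem_product.mpr ⟨hu0S, hu0T⟩),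
        sum_sing_E (x, y) 0 (Finset.mem_product.mpr ⟨hxS, hyT⟩),
        sum_sing_E (u0, y) (-δ) (Finset.mem_product.mpr ⟨hu0S, hyT⟩),
        sum_sing_E (x, u0) (-δ) (Finset.mem_product.mpr ⟨hxS, hu0T⟩),
        sum_sing_NN_miss (x, y) δ (fun u hu h => hNNnex u hu (congrArg Prod.fst h)),
        sum_sing_NN_miss (u0, u0) δ (fun u hu h => hu0ney (congrArg Prod.snd h).symm),
        sum_sing_NN_miss (x, y) 0 (fun u hu h => hNNnex u hu (congrArg Prod.fst h)),
        sum_sing_NN_hit (-δ),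
        sum_sing_NN_miss (x, u0) (-δ) (fun u hu h => hu0ney (congrArg Prod.snd h).symm)]
      ring
    have hcontr := hmin _ hplan'
    rw [hFdiff, dxy, du0u0, du0y, dxu0] at hcontr
    nlinarith [hcontr, hδ0, hη]

end Clean

section Surgery
open Function Finset

variable {V : Type*} (G : SimpleGraph V) [G.LocallyFinite]

lemma sum_affine_div {α : Type*} (s : Finset α) (f g : α → ℝ) (c b : ℝ) :
    ∑ v ∈ s, (f v + c * g v) / b = ((∑ v ∈ s, f v) + c * ∑ v ∈ s, g v) / b := by
  have h : ∀ v ∈ s, (f v + c * g v) / b = f v / b + c * (g v / b) := fun v _ => by ring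
  rw [Finset.sum_congr rfl h, Finset.sum_add_distrib, ← Finset.mul_sum,
    ← Finset.sum_div, ← Finset.sum_div]
  ring

set_option maxHeartbeats 1000000 in
lemma surgery (hG : G.Connected) {x y : V} (hxy : G.Adj x y)
    {p : ℝ} (hp : 1/2 ≤ p) (hp1 : p < 1)
    {π : (V × V) → ℝ} (hπ : IsPlan π (mu G x p) (mu G y p))
    (hclean : ∀ u ∈ G.neighborFinset x ∩ G.neighborFinset y, π (u, y) = 0) :
    (1 - p) * W1 G (mu G x 0) (mu G y 0)
      ≤ cost G π - p + 2 * (1 - p) / (G.degree x) := by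
  have hdx : 0 < G.degree x := (G.degree_pos_iff_exists_adj x).mpr ⟨y, hxy⟩
  have hdy : 0 < G.degree y := (G.degree_pos_iff_exists_adj y).mpr ⟨x, hxy.symm⟩
  have hp0 : (0:ℝ) ≤ p := by linarith
  have hβ : (0:ℝ) < 1 - p := by linarith
  have hβne : (1:ℝ) - p ≠ 0 := ne_of_gt hβ
  set Nx := G.neighborFinset x with hNx
  set Ny := G.neighborFinset y with hNy
  set S := insert x Nx with hS
  set T := insert y Ny with hT
  have hxNx : x ∉ Nx := G.notMem_neighborFinset_self x
  have hyNy : y ∉ Ny := G.notMem_neighborFinset_self y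
  have hyNx : y ∈ Nx := (SimpleGraph.mem_neighborFinset G x y).mpr hxy
  have hxNy : x ∈ Ny := (SimpleGraph.mem_neighborFinset G y x).mpr hxy.symm
  have hmemNx : ∀ u ∈ Nx, G.Adj x u := fun u hu => (SimpleGraph.mem_neighborFinset G x u).mp hu
  have hmemNy : ∀ v ∈ Ny, G.Adj y v := fun v hv => (SimpleGraph.mem_neighborFinset G y v).mp hv
  set a := π (x, y) with ha
  set α := p - a with hα
  -- marginal identities
  have hrowT : ∀ u, ∑ v ∈ T, π (u, v) = mu G x p u :=
    fun u => hπ.rowsum (mu_support_subset G y p) u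
  have hcolS : ∀ v, ∑ u ∈ S, π (u, v) = mu G y p v :=
    fun v => hπ.colsum (mu_support_subset G x p) v
  have halpha : ∑ v ∈ Ny, π (x, v) = α := by
    have h1 := hrowT x
    rw [hT, Finset.sum_insert hyNy, mu_apply_self] at h1
    rw [hα]; linarith
  have halpha' : ∑ u ∈ Nx, π (u, y) = α := by
    have h1 := hcolS y
    rw [hS, Finset.sum_insert hxNx, mu_apply_self] at h1
    rw [hα]; linarith
  have hα0 : 0 ≤ α := by
    rw [← halpha]
    exact Finset.sum_nonneg fun v _ => hπ.nonneg _
  set wfac : ℝ := if α = 0 then 0 else α⁻¹ with hwfac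
  have hwfac0 : 0 ≤ wfac := by
    rw [hwfac]; split_ifs with h
    · exact le_refl 0
    · exact inv_nonneg.mpr hα0
  have hszero : α = 0 → ∀ u ∈ Nx, π (u, y) = 0 := by
    intro h0 u hu
    have := (Finset.sum_eq_zero_iff_of_nonneg (fun u _ => hπ.nonneg ((u, y) : V × V))).mp
      (by rw [halpha', h0])
    exact this u hu
  have hrzero : α = 0 → ∀ v ∈ Ny, π (x, v) = 0 := by
    intro h0 v hv
    have := (Finset.sum_eq_zero_iff_of_nonneg (fun v _ => hπ.nonneg ((x, v) : V × V))).mp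
      (by rw [halpha, h0])
    exact this v hv
  have hsfix : ∀ u ∈ Nx, π (u, y) * (1 - wfac * α) = 0 := by
    intro u hu
    rw [hwfac]
    split_ifs with h
    · rw [hszero h u hu]; ring
    · rw [inv_mul_cancel₀ h]; ring
  have hrfix : ∀ v ∈ Ny, π (x, v) * (1 - wfac * α) = 0 := by
    intro v hv
    rw [hwfac]
    split_ifs with h
    · rw [hrzero h v hv]; ring
    · rw [inv_mul_cancel₀ h]; ring
  -- the surgery plan
  set ρ : (V × V) → ℝ := fun q =>
    if q.1 = x ∨ q.2 = y then 0
    else (π q + wfac * π (q.1, y) * π (x, q.2)) / (1 - p) with hρ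
  have hρval : ∀ u v : V, u ≠ x → v ≠ y →
      ρ (u, v) = (π (u, v) + wfac * π (u, y) * π (x, v)) / (1 - p) := by
    intro u v hu hv
    rw [hρ]
    simp only []
    rw [if_neg (by push_neg; exact ⟨hu, hv⟩)]
  have hρx : ∀ v, ρ (x, v) = 0 := fun v => by rw [hρ]; simp
  have hρy : ∀ u, ρ (u, y) = 0 := fun u => by rw [hρ]; simp
  have hρ0 : ∀ u v : V, u ∉ Nx ∨ v ∉ Ny → ρ (u, v) = 0 := by
    intro u v huv
    by_cases hu : u = x
    · rw [hu]; exact hρx v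
    by_cases hv : v = y
    · rw [hv]; exact hρy u
    rw [hρval u v hu hv]
    rcases huv with h | h
    · have h1 : mu G x p u = 0 := mu_apply_not G p hu (fun hadj => h (by
        rw [hNx, SimpleGraph.mem_neighborFinset]; exact hadj))
      rw [hπ.row_zero h1, hπ.row_zero h1]
      simp
    · have h1 : mu G y p v = 0 := mu_apply_not G p hv (fun hadj => h (by
        rw [hNy, SimpleGraph.mem_neighborFinset]; exact hadj))
      rw [hπ.col_zero h1, hπ.col_zero h1]
      simp
  have hρnn : ∀ q, 0 ≤ ρ q := by
    rintro ⟨u, v⟩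
    rw [hρ]
    simp only []
    split_ifs
    · exact le_refl 0
    · apply div_nonneg _ hβ.le
      have := hπ.nonneg ((u, v) : V × V)
      have h2 := hπ.nonneg ((u, y) : V × V)
      have h3 := hπ.nonneg ((x, v) : V × V)
      positivity
  -- row sums of ρ
  have hrowρ : ∀ u, ∑ v ∈ T, ρ (u, v) = mu G x 0 u := by
    intro u
    by_cases hu : u = x
    · rw [hu, mu_apply_self]
      exact Finset.sum_eq_zero fun v _ => hρx v
    by_cases huNx : u ∈ Nx
    · have hune : u ≠ x := hu
      rw [hT, Finset.sum_insert hyNy, hρy u]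
      rw [Finset.sum_congr rfl (fun v hv => hρval u v hune (fun h => hyNy (h ▸ hv)))]
      rw [sum_affine_div Ny (fun v => π (u, v)) (fun v => π (x, v)) (wfac * π (u, y)) (1 - p)]
      rw [halpha]
      have h1 : ∑ v ∈ Ny, π (u, v) = mu G x p u - π (u, y) := by
        have := hrowT u
        rw [hT, Finset.sum_insert hyNy] at this
        linarith
      rw [h1]
      have h2 := hsfix u huNx
      have key : mu G x p u - π (u, y) + wfac * π (u, y) * α = mu G x p u := by
        nlinarith [h2]
      have h3 : mu G x 0 u = mu G x p u / (1 - p) := by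
        rw [mu_scale G (p := 0) (p' := p) (ne_of_lt hp1) hune]; ring
      rw [key, h3, zero_add]
    · rw [mu_apply_not G 0 hu (fun hadj => huNx (by
        rw [hNx, SimpleGraph.mem_neighborFinset]; exact hadj))]
      exact Finset.sum_eq_zero fun v _ => hρ0 u v (Or.inl huNx)
  have hcolρ : ∀ v, ∑ u ∈ S, ρ (u, v) = mu G y 0 v := by
    intro v
    by_cases hv : v = y
    · rw [hv, mu_apply_self]
      exact Finset.sum_eq_zero fun u _ => hρy u
    by_cases hvNy : v ∈ Ny
    · have hvne : v ≠ y := hv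
      rw [hS, Finset.sum_insert hxNx, hρx v]
      have hcongr : ∀ u ∈ Nx, ρ (u, v)
          = (π (u, v) + (wfac * π (x, v)) * π (u, y)) / (1 - p) := by
        intro u hu
        rw [hρval u v (fun h => hxNx (h ▸ hu)) hvne]
        ring_nf
      rw [Finset.sum_congr rfl hcongr]
      rw [sum_affine_div Nx (fun u => π (u, v)) (fun u => π (u, y)) (wfac * π (x, v)) (1 - p)]
      rw [halpha']
      have h1 : ∑ u ∈ Nx, π (u, v) = mu G y p v - π (x, v) := by
        have := hcolS v
        rw [hS, Finset.sum_insert hxNx] at this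
        linarith
      rw [h1]
      have h2 := hrfix v hvNy
      have key : mu G y p v - π (x, v) + wfac * π (x, v) * α = mu G y p v := by
        nlinarith [h2]
      have h3 : mu G y 0 v = mu G y p v / (1 - p) := by
        rw [mu_scale G (p := 0) (p' := p) (ne_of_lt hp1) hvne]; ring
      rw [key, h3, zero_add]
    · rw [mu_apply_not G 0 hv (fun hadj => hvNy (by
        rw [hNy, SimpleGraph.mem_neighborFinset]; exact hadj))]
      exact Finset.sum_eq_zero fun u _ => hρ0 u v (Or.inr hvNy)
  -- ρ is a plan for idleness 0
  have hρsupp_row : ∀ u, (support fun v => ρ (u, v)) ⊆ ↑T := by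
    intro u v hv
    by_contra hvT
    have hvNy : v ∉ Ny := fun h => hvT (by rw [hT]; exact Finset.mem_insert_of_mem h)
    exact hv (hρ0 u v (Or.inr hvNy))
  have hρsupp_col : ∀ v, (support fun u => ρ (u, v)) ⊆ ↑S := by
    intro v u hu
    by_contra huS
    have huNx : u ∉ Nx := fun h => huS (by rw [hS]; exact Finset.mem_insert_of_mem h)
    exact hu (hρ0 u v (Or.inl huNx))
  have hρplan : IsPlan ρ (mu G x 0) (mu G y 0) := by
    refine ⟨?_, ?_, ?_, ?_⟩
    · rintro ⟨u, v⟩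
      refine ⟨hρnn (u, v), ?_⟩
      by_cases huNx : u ∈ Nx
      · have h1 : ρ (u, v) ≤ ∑ v' ∈ T, ρ (u, v') := by
          by_cases hvT : v ∈ T
          · exact Finset.single_le_sum (fun v' _ => hρnn (u, v')) hvT
          · have : ρ (u, v) = 0 := hρ0 u v (Or.inr (fun h => hvT (by
              rw [hT]; exact Finset.mem_insert_of_mem h)))
            rw [this]
            exact Finset.sum_nonneg fun v' _ => hρnn (u, v')
        rw [hrowρ u] at h1
        exact h1.trans (mu_le_one G hdx (le_refl 0) zero_le_one u)
      · rw [hρ0 u v (Or.inl huNx)]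
        exact zero_le_one
    · apply Set.Finite.subset (S ×ˢ T).finite_toSet
      rintro ⟨u, v⟩ hq
      rw [Finset.coe_product]
      refine ⟨?_, ?_⟩
      · by_contra huS
        exact hq (hρ0 u v (Or.inl (fun h => huS
          (Finset.mem_coe.mpr (Finset.mem_insert_of_mem h)))))
      · by_contra hvT
        exact hq (hρ0 u v (Or.inr (fun h => hvT
          (Finset.mem_coe.mpr (Finset.mem_insert_of_mem h)))))
    · intro u
      rw [finsum_eq_sum_of_support_subset _ (hρsupp_row u)]
      exact hrowρ u
    · intro v
      rw [finsum_eq_sum_of_support_subset _ (hρsupp_col v)]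
      exact hcolρ v
  -- distances
  have dxy : (G.dist x y : ℝ) = 1 := by
    rw [SimpleGraph.dist_eq_one_iff_adj.mpr hxy]; norm_num
  have dyadj : ∀ v ∈ Ny, (G.dist y v : ℝ) = 1 := fun v hv => by
    rw [SimpleGraph.dist_eq_one_iff_adj.mpr (hmemNy v hv)]; norm_num
  have hdist : ∀ u ∈ Nx, ∀ v ∈ Ny, π (u, y) * π (x, v) ≠ 0 →
      (G.dist u v : ℝ) ≤ (G.dist u y : ℝ) + (G.dist x v : ℝ) - 1
        + 2 * (if u = y then 1 else 0) := by
    intro u hu v hv h0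
    by_cases huy : u = y
    · subst huy
      rw [if_pos rfl, dyadj v hv, SimpleGraph.dist_self]
      have h1 : (0:ℝ) ≤ (G.dist x v : ℝ) := Nat.cast_nonneg _
      norm_num
      linarith
    · rw [if_neg huy]
      have hsne : π (u, y) ≠ 0 := left_ne_zero_of_mul h0
      have huny : u ∉ Ny := fun h => hsne (hclean u (Finset.mem_inter.mpr ⟨hu, h⟩))
      have hnadj : ¬ G.Adj y u := fun h => huny ((SimpleGraph.mem_neighborFinset G y u).mpr h)
      have hpos : 0 < G.dist u y := hG.pos_dist_of_ne huy
      have hne1 : G.dist u y ≠ 1 := fun h => hnadj (SimpleGraph.dist_eq_one_iff_adj.mp h).symm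
      have h2 : 2 ≤ G.dist u y := by omega
      have htri : G.dist u v ≤ G.dist u x + G.dist x v := hG.dist_triangle
      have hux : G.dist u x = 1 := SimpleGraph.dist_eq_one_iff_adj.mpr (hmemNx u hu).symm
      have hc2 : (2:ℝ) ≤ (G.dist u y : ℝ) := by exact_mod_cast h2
      have hc3 : (G.dist u v : ℝ) ≤ 1 + (G.dist x v : ℝ) := by
        rw [hux] at htri; exact_mod_cast htri
      norm_num
      linarith
  -- aggregated quantities
  set Sd := ∑ u ∈ Nx, (G.dist u y : ℝ) * π (u, y) with hSd
  set Rd := ∑ v ∈ Ny, (G.dist x v : ℝ) * π (x, v) with hRd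
  set tpart := ∑ q ∈ Nx ×ˢ Ny, (G.dist q.1 q.2 : ℝ) * π q with htp
  -- decomposition of cost π
  have hcostπ : cost G π = a + Rd + Sd + tpart := by
    rw [cost_eq_sum hπ (mu_support_subset G x p) (mu_support_subset G y p), ← hS, ← hT]
    rw [Finset.sum_product]
    rw [hS, Finset.sum_insert hxNx]
    have e1 : ∀ u : V, ∑ v ∈ T, (G.dist u v : ℝ) * π (u, v)
        = (G.dist u y : ℝ) * π (u, y) + ∑ v ∈ Ny, (G.dist u v : ℝ) * π (u, v) := by
      intro u
      rw [hT, Finset.sum_insert hyNy]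
    rw [e1 x, Finset.sum_congr rfl (fun u (hu : u ∈ Nx) => e1 u), Finset.sum_add_distrib]
    rw [← hSd]
    have e2 : ∑ u ∈ Nx, ∑ v ∈ Ny, (G.dist u v : ℝ) * π (u, v) = tpart := by
      rw [htp, Finset.sum_product]
    rw [e2, dxy, ← ha]
    have e3 : ∑ v ∈ Ny, (G.dist x v : ℝ) * π (x, v) = Rd := by rw [hRd]
    rw [e3]
    ring
  -- cost of ρ over the inner square
  have hcostρ : cost G ρ = ∑ q ∈ Nx ×ˢ Ny, (G.dist q.1 q.2 : ℝ) * ρ q := by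
    rw [cost_eq_sum hρplan (mu_support_subset G x 0) (mu_support_subset G y 0), ← hS, ← hT]
    symm
    apply Finset.sum_subset
    · intro q hq
      rw [Finset.mem_product] at hq ⊢
      exact ⟨Finset.mem_insert_of_mem hq.1, Finset.mem_insert_of_mem hq.2⟩
    · rintro ⟨u, v⟩ _ hq2
      rw [Finset.mem_product] at hq2
      have : u ∉ Nx ∨ v ∉ Ny := by tauto
      rw [hρ0 u v this, mul_zero]
  have hβρ : (1 - p) * cost G ρ
      = ∑ q ∈ Nx ×ˢ Ny, (G.dist q.1 q.2 : ℝ) * (π q + wfac * π (q.1, y) * π (x, q.2)) := by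
    rw [hcostρ, Finset.mul_sum]
    apply Finset.sum_congr rfl
    rintro ⟨u, v⟩ hq
    rw [Finset.mem_product] at hq
    rw [hρval u v (fun h => hxNx (h ▸ hq.1)) (fun h => hyNy (h ▸ hq.2))]
    field_simp
  -- split
  have hsplit : (1 - p) * cost G ρ = tpart
      + ∑ q ∈ Nx ×ˢ Ny, (G.dist q.1 q.2 : ℝ) * (wfac * π (q.1, y) * π (x, q.2)) := by
    rw [hβρ, htp]
    rw [← Finset.sum_add_distrib]
    apply Finset.sum_congr rfl
    intro q _
    ring
  -- pointwise bound
  have hW2 : ∑ q ∈ Nx ×ˢ Ny, (G.dist q.1 q.2 : ℝ) * (wfac * π (q.1, y) * π (x, q.2))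
      ≤ ∑ q ∈ Nx ×ˢ Ny, ((G.dist q.1 y : ℝ) + (G.dist x q.2 : ℝ) - 1
          + 2 * (if q.1 = y then 1 else 0)) * (wfac * π (q.1, y) * π (x, q.2)) := by
    apply Finset.sum_le_sum
    rintro ⟨u, v⟩ hq
    rw [Finset.mem_product] at hq
    by_cases h0 : π (u, y) * π (x, v) = 0
    · have hz : wfac * π (u, y) * π (x, v) = 0 := by
        rw [mul_assoc, h0, mul_zero]
      rw [hz, mul_zero, mul_zero]
    · exact mul_le_mul_of_nonneg_right (hdist u hq.1 v hq.2 h0)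
        (mul_nonneg (mul_nonneg hwfac0 (hπ.nonneg _)) (hπ.nonneg _))
  -- closed form of the coefficient sum
  have hinner : ∀ u ∈ Nx, ∑ v ∈ Ny, ((G.dist u y : ℝ) + (G.dist x v : ℝ) - 1
        + 2 * (if u = y then 1 else 0)) * (wfac * π (u, y) * π (x, v))
      = wfac * π (u, y) * (((G.dist u y : ℝ) - 1 + 2 * (if u = y then 1 else 0)) * α + Rd) := by
    intro u hu
    have e1 : ∀ v ∈ Ny, ((G.dist u y : ℝ) + (G.dist x v : ℝ) - 1
          + 2 * (if u = y then 1 else 0)) * (wfac * π (u, y) * π (x, v))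
        = ((G.dist u y : ℝ) - 1 + 2 * (if u = y then 1 else 0)) * (wfac * π (u, y)) * π (x, v)
          + (wfac * π (u, y)) * ((G.dist x v : ℝ) * π (x, v)) := by
      intro v _
      ring
    rw [Finset.sum_congr rfl e1, Finset.sum_add_distrib, ← Finset.mul_sum, ← Finset.mul_sum]
    rw [halpha, ← hRd]
    ring
  have hcoefeq : ∑ q ∈ Nx ×ˢ Ny, ((G.dist q.1 y : ℝ) + (G.dist x q.2 : ℝ) - 1
        + 2 * (if q.1 = y then 1 else 0)) * (wfac * π (q.1, y) * π (x, q.2))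
      = wfac * α * (Sd + Rd - α + 2 * π (y, y)) := by
    rw [Finset.sum_product]
    rw [Finset.sum_congr rfl (fun u hu => hinner u hu)]
    have e2 : ∀ u ∈ Nx, wfac * π (u, y)
          * (((G.dist u y : ℝ) - 1 + 2 * (if u = y then 1 else 0)) * α + Rd)
        = wfac * α * ((G.dist u y : ℝ) * π (u, y)) - wfac * α * π (u, y)
          + wfac * α * (2 * (if u = y then 1 else 0) * π (u, y))
          + wfac * Rd * π (u, y) := by
      intro u _
      by_cases h : u = y <;> simp [h] <;> ring
    rw [Finset.sum_congr rfl e2]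
    rw [Finset.sum_add_distrib, Finset.sum_add_distrib, Finset.sum_sub_distrib]
    rw [← Finset.mul_sum, ← Finset.mul_sum, ← Finset.mul_sum, ← Finset.mul_sum]
    rw [← hSd, halpha']
    have e3 : ∑ u ∈ Nx, 2 * (if u = y then 1 else 0) * π (u, y) = 2 * π (y, y) := by
      rw [Finset.sum_eq_single y (fun u _ hne => by rw [if_neg hne]; ring)
        (fun h => absurd hyNx h)]
      rw [if_pos rfl]
      ring
    rw [e3]
    ring
  -- bound the closed form
  have hfinal2 : wfac * α * (Sd + Rd - α + 2 * π (y, y)) ≤ Sd + Rd - α + 2 * π (y, y) := by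
    by_cases h : α = 0
    · have hS0 : Sd = 0 := by
        rw [hSd]
        exact Finset.sum_eq_zero fun u hu => by rw [hszero h u hu, mul_zero]
      have hR0 : Rd = 0 := by
        rw [hRd]
        exact Finset.sum_eq_zero fun v hv => by rw [hrzero h v hv, mul_zero]
      have hyy : π (y, y) = 0 := hszero h y hyNx
      rw [hS0, hR0, hyy, h]
      norm_num
    · have : wfac * α = 1 := by
        rw [hwfac, if_neg h]
        exact inv_mul_cancel₀ h
      rw [this, one_mul]
  -- assemble
  have hsy : π (y, y) ≤ (1 - p) / (G.degree x) := by
    have := hπ.entry_le_row y y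
    rwa [mu_apply_adj G p hxy] at this
  have hWρ : W1 G (mu G x 0) (mu G y 0) ≤ cost G ρ := W1_le_cost hρplan
  have hchain : (1 - p) * cost G ρ ≤ cost G π - p + 2 * ((1 - p) / (G.degree x)) := by
    rw [hsplit, hcostπ]
    have := le_trans hW2 (le_of_eq hcoefeq)
    have h2 := le_trans this hfinal2
    rw [hα] at h2
    linarith
  have hmul : (1 - p) * W1 G (mu G x 0) (mu G y 0) ≤ (1 - p) * cost G ρ :=
    mul_le_mul_of_nonneg_left hWρ hβ.le
  calc (1 - p) * W1 G (mu G x 0) (mu G y 0) ≤ (1 - p) * cost G ρ := hmul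
    _ ≤ cost G π - p + 2 * ((1 - p) / (G.degree x)) := hchain
    _ = cost G π - p + 2 * (1 - p) / (G.degree x) := by ring

end Surgery


section Final
open Function Finset

variable {V : Type*} (G : SimpleGraph V) [G.LocallyFinite]

lemma W1_zero_bound (hG : G.Connected) {x y : V} (hxy : G.Adj x y)
    (hd : G.degree y ≤ G.degree x) :
    W1 G (mu G x 0) (mu G y 0)
      ≤ (2 * W1 G (mu G x 2⁻¹) (mu G y 2⁻¹) - 1) + 2 / (G.degree x) := by
  have hdx : 0 < G.degree x := (G.degree_pos_iff_exists_adj x).mpr ⟨y, hxy⟩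
  have hdxr : (0:ℝ) < (G.degree x : ℝ) := by exact_mod_cast hdx
  apply le_of_forall_pos_le_add
  intro ε hε
  obtain ⟨π0, hplan, hcost, hclean⟩ := clean_min_plan G hG hxy hd
    (p := 2⁻¹) (by norm_num) (by norm_num) (η := ε/2) (by linarith)
  have hsur := surgery G hG hxy (p := 2⁻¹) (by norm_num) (by norm_num) hplan hclean
  have e1 : 2 * ((1:ℝ) - 2⁻¹) / (G.degree x : ℝ) = 1 / (G.degree x : ℝ) := by
    norm_num
  have e2 : (2:ℝ) / (G.degree x : ℝ) = 2 * (1 / (G.degree x : ℝ)) := by ring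
  rw [e1] at hsur
  rw [e2]
  have e3 : ((1:ℝ) - 2⁻¹) = 2⁻¹ := by norm_num
  rw [e3] at hsur
  linarith

end Final


theorem stmt17 {V : Type*} (G : SimpleGraph V) [G.LocallyFinite] (hG : G.Connected)
    (x y : V) (hxy : G.Adj x y) (hd : G.degree y ≤ G.degree x) (K : ℝ)
    (hK : Filter.Tendsto (fun p => kappa G p x y / (1 - p)) (nhdsWithin 1 (Set.Iio 1)) (nhds K)) :
    kappa G 0 x y ≤ K ∧ K ≤ kappa G 0 x y + 2 / (G.degree x : ℝ) := by
  have hdx : 0 < G.degree x := (G.degree_pos_iff_exists_adj x).mpr ⟨y, hxy⟩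
  have hdxr : (0:ℝ) < (G.degree x : ℝ) := by exact_mod_cast hdx
  set C := 2 * W1 G (mu G x 2⁻¹) (mu G y 2⁻¹) - 1 with hC
  have hconst : (fun p => kappa G p x y / (1 - p))
      =ᶠ[nhdsWithin 1 (Set.Iio 1)] (fun _ => 1 - C) := by
    have hmem : Set.Ioo (1/2 : ℝ) 1 ∈ nhdsWithin 1 (Set.Iio 1) := by
      apply Ioo_mem_nhdsLT_of_mem
      constructor <;> norm_num
    filter_upwards [hmem] with p hp
    rw [kappa_ratio_const G hxy (le_of_lt hp.1) hp.2, hC]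
  have hKeq : K = 1 - C :=
    tendsto_nhds_unique hK (Filter.Tendsto.congr' hconst.symm tendsto_const_nhds)
  have hk0 : kappa G 0 x y = 1 - W1 G (mu G x 0) (mu G y 0) := rfl
  constructor
  · have h1 := W1_scale_ineq G hxy (p := 2⁻¹) (p' := 0)
      (by norm_num) (by norm_num) (le_refl 0) (by norm_num)
    have e1 : ((1:ℝ) - 2⁻¹)/((1:ℝ) - 0) = 2⁻¹ := by norm_num
    rw [e1] at h1
    rw [hKeq, hk0, hC]
    linarith
  · have h2 := W1_zero_bound G hG hxy hd
    rw [hKeq, hk0, hC] at *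
    linarith
end
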